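/- arXiv:2206.15100 — 3 statements merged into one kernel-verified Lean document; each statement's English description precedes it below -/
import Mathlib

section
/- For any p-strings S and T, S and T are a parameterized match (S ≈ T) if and only if ⟦S⟧ = ⟦T⟧. -/
/-! Common framework: parameterized strings over static alphabet `σ` and
parameter alphabet `π`.  A p-string is a `List (σ ⊕ π)`. -/

variable {σ π : Type*}

instance instInhabSum [Inhabited σ] : Inhabited (σ ⊕ π) := ⟨Sum.inl default⟩

/-- one right rotation: the last character moves to the front -/
def rotR1 {α : Type*} (W : List α) : List α := W.rotate (W.length - 1)

/-- `rotR W i` is the `i`-th right rotation `Rot(W, i)` -/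
def rotR {α : Type*} (W : List α) : ℕ → List α
  | 0 => W
  | i + 1 => rotR1 (rotR W i)

/-- 1-based access `W[i]` (junk default outside the range) -/
def get1 {α : Type*} [Inhabited α] (W : List α) (i : ℕ) : α := W.getD (i - 1) default

/-- the prev-encoding `⟨T⟩`, a list over `σ ⊕ ℕ∞` -/
def prevEnc [DecidableEq σ] [DecidableEq π] (T : List (σ ⊕ π)) : List (σ ⊕ ℕ∞) :=
  (List.range T.length).map fun k =>
    match T[k]? with
    | none => Sum.inr ⊤
    | some (Sum.inl a) => Sum.inl a
    | some (Sum.inr b) =>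
      match ((List.range k).filter fun j => T[j]? = some (Sum.inr b)).max? with
      | none => Sum.inr ⊤
      | some j => Sum.inr ((k - j : ℕ) : ℕ∞)

/-- number of distinct parameter characters occurring in `W` -/
def distinctParams [DecidableEq π] (W : List (σ ⊕ π)) : ℕ :=
  (W.filterMap Sum.getRight?).dedup.length

/-- the encoding `⟦T⟧`, a list over `σ ⊕ ℕ`:  a static character is kept; a
parameter character at (1-based) position `i` is replaced by the number of
distinct parameter characters in `Rot(T, n-i)[1:ℓ]` where `ℓ` is the leftmost
occurrence position of `T[i]` in `Rot(T, n-i)`. -/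
def encodeE [DecidableEq σ] [DecidableEq π] (T : List (σ ⊕ π)) : List (σ ⊕ ℕ) :=
  (List.range T.length).map fun k =>
    match T[k]? with
    | none => Sum.inr 0
    | some (Sum.inl a) => Sum.inl a
    | some (Sum.inr b) =>
      let R := rotR T (T.length - (k + 1))
      Sum.inr (distinctParams (R.take (R.idxOf (Sum.inr b) + 1)))

/-- order on prev-encoding characters: every static character is smaller than
every element of `ℕ∞` (and `ℕ∞` carries its usual order with `∞` on top) -/
def pvlt [LT σ] : (σ ⊕ ℕ∞) → (σ ⊕ ℕ∞) → Prop
  | Sum.inl a, Sum.inl b => a < b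
  | Sum.inl _, Sum.inr _ => True
  | Sum.inr _, Sum.inl _ => False
  | Sum.inr x, Sum.inr y => x < y

/-- `T` is a p-string of length ≥ 1 ending with the static character `d`,
which occurs nowhere else in `T`. -/
def EndsWith [DecidableEq σ] [DecidableEq π] (T : List (σ ⊕ π)) (d : σ) : Prop :=
  1 ≤ T.length ∧ T.getLast? = some (Sum.inl d) ∧ T.count (Sum.inl d) = 1

/-- `RA` represents the parameterized rotation array `RA_T` (0-based indices:
`RA_T[i] = (RA ⟨i-1⟩).val + 1`): the prev-encodings of the rotations are listed
in strictly increasing lexicographic order. -/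
def IsRA [LinearOrder σ] [DecidableEq π] (T : List (σ ⊕ π))
    (RA : Fin T.length ≃ Fin T.length) : Prop :=
  ∀ i j : Fin T.length, i < j →
    List.Lex pvlt (prevEnc (rotR T ((RA i).val + 1))) (prevEnc (rotR T ((RA j).val + 1)))

/-- `LF` represents the LF mapping: `LF_T(i) = j` iff `T_{RA_T[i]+1} = T_{RA_T[j]}`. -/
def IsLF [LinearOrder σ] [DecidableEq π] (T : List (σ ⊕ π))
    (RA LF : Fin T.length ≃ Fin T.length) : Prop :=
  ∀ i : Fin T.length, rotR T ((RA i).val + 2) = rotR T ((RA (LF i)).val + 1)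

/-- the pBWT array `L_T[i] = ⟦T_{RA_T[i]}⟧[n]` -/
def Larr [LinearOrder σ] [DecidableEq π] [Inhabited σ] (T : List (σ ⊕ π))
    (RA : Fin T.length ≃ Fin T.length) (i : Fin T.length) : σ ⊕ ℕ :=
  get1 (encodeE (rotR T ((RA i).val + 1))) T.length

/-- the array `F_T[i] = ⟦T_{RA_T[i]}⟧[1]` -/
def Farr [LinearOrder σ] [DecidableEq π] [Inhabited σ] (T : List (σ ⊕ π))
    (RA : Fin T.length ≃ Fin T.length) (i : Fin T.length) : σ ⊕ ℕ :=
  get1 (encodeE (rotR T ((RA i).val + 1))) 1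

/-- longest common prefix of two lists -/
def lcp {α : Type*} [DecidableEq α] : List α → List α → List α
  | a :: as, b :: bs => if a = b then a :: lcp as bs else []
  | _, _ => []

/-- `lcp∞(X, Y)`: the number of `∞`'s in the longest common prefix of `X` and `Y` -/
def lcpInf [DecidableEq σ] (X Y : List (σ ⊕ ℕ∞)) : ℕ :=
  (lcp X Y).count (Sum.inr ⊤)

/-- the `∞`-LCP array (1-based): `LCP∞_T[i] = lcp∞(⟨T_{RA_T[i]}⟩, ⟨T_{RA_T[i+1]}⟩)`
for `1 ≤ i < n`, and `0` otherwise. -/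
def LCPa [LinearOrder σ] [DecidableEq π] (T : List (σ ⊕ π))
    (RA : Fin T.length ≃ Fin T.length) (i : ℕ) : ℕ :=
  if h : 1 ≤ i ∧ i < T.length then
    lcpInf (prevEnc (rotR T ((RA ⟨i - 1, by omega⟩).val + 1)))
           (prevEnc (rotR T ((RA ⟨i, h.2⟩).val + 1)))
  else 0

/-- parameterized match: a bijection on `σ ⊕ π` fixing all static characters
renames `S` into `T` -/
def PMatch (S T : List (σ ⊕ π)) : Prop :=
  ∃ f : (σ ⊕ π) ≃ (σ ⊕ π), (∀ a : σ, f (Sum.inl a) = Sum.inl a) ∧ S.map f = T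

/-- leftmost (1-based) occurrence position of `c` in `W`, `0` if absent -/
def leftPos [DecidableEq σ] [DecidableEq π] (W : List (σ ⊕ π)) (c : σ ⊕ π) : ℕ :=
  if W.contains c then W.idxOf c + 1 else 0

/-- rightmost (1-based) occurrence position of `c` in `W`, `0` if absent -/
def rightPos [DecidableEq σ] [DecidableEq π] (W : List (σ ⊕ π)) (c : σ ⊕ π) : ℕ :=
  if W.contains c then W.length - W.reverse.idxOf c else 0

set_option linter.unusedSectionVars false

namespace PMEAux

/-! ### generic `indexOf` lemmas for a lawful-enough `BEq` -/

section GenBEq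

variable {α : Type*} [BEq α] [DecidableEq α]

lemma gen_indexOf_cons (hbeq : ∀ x y : α, (x == y) = true ↔ x = y) (x a : α) (l : List α) :
    (x :: l).idxOf a = if x = a then 0 else l.idxOf a + 1 := by
  rw [List.idxOf_cons]
  by_cases h : x = a
  · have hb : (x == a) = true := (hbeq x a).2 h
    rw [if_pos h, hb]; rfl
  · have hb : (x == a) = false := by
      cases hxa : (x == a)
      · rfl
      · exact absurd ((hbeq x a).1 hxa) h
    rw [if_neg h, hb]; rfl

lemma gen_indexOf_lt_length (hbeq : ∀ x y : α, (x == y) = true ↔ x = y) {a : α} :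
    ∀ {l : List α}, a ∈ l → l.idxOf a < l.length
  | [], h => by simp at h
  | x :: l, h => by
    rw [gen_indexOf_cons hbeq]
    by_cases hx : x = a
    · simp [hx]
    · rw [if_neg hx]
      have ha : a ∈ l := by
        rcases List.mem_cons.1 h with h1 | h1
        · exact absurd h1.symm hx
        · exact h1
      have := gen_indexOf_lt_length hbeq ha
      simp only [List.length_cons]
      omega

lemma gen_indexOf_get? (hbeq : ∀ x y : α, (x == y) = true ↔ x = y) {a : α} :
    ∀ {l : List α}, a ∈ l → l[l.idxOf a]? = some a
  | [], h => by simp at h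
  | x :: l, h => by
    rw [gen_indexOf_cons hbeq]
    by_cases hx : x = a
    · rw [if_pos hx, hx]; rfl
    · rw [if_neg hx]
      have ha : a ∈ l := by
        rcases List.mem_cons.1 h with h1 | h1
        · exact absurd h1.symm hx
        · exact h1
      simpa using gen_indexOf_get? hbeq ha

lemma gen_get?_ne_of_lt_indexOf (hbeq : ∀ x y : α, (x == y) = true ↔ x = y) :
    ∀ (l : List α) (a : α) (j : ℕ), j < l.idxOf a → l[j]? ≠ some a
  | [], a, j, h => by simp
  | x :: l, a, j, h => by
    rw [gen_indexOf_cons hbeq] at h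
    by_cases hx : x = a
    · rw [if_pos hx] at h; omega
    · rw [if_neg hx] at h
      match j with
      | 0 => simpa using hx
      | j + 1 =>
        simp only [List.getElem?_cons_succ]
        exact gen_get?_ne_of_lt_indexOf hbeq l a j (by omega)

lemma gen_indexOf_le_of_get? (hbeq : ∀ x y : α, (x == y) = true ↔ x = y)
    {l : List α} {a : α} {j : ℕ} (h : l[j]? = some a) : l.idxOf a ≤ j := by
  by_contra hlt
  push_neg at hlt
  exact gen_get?_ne_of_lt_indexOf hbeq l a j hlt h

lemma gen_indexOf_map (hbeq : ∀ x y : α, (x == y) = true ↔ x = y)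
    {f : α → α} (hf : Function.Injective f) :
    ∀ (l : List α) (a : α), (l.map f).idxOf (f a) = l.idxOf a
  | [], a => by simp
  | x :: l, a => by
    rw [List.map_cons, gen_indexOf_cons hbeq, gen_indexOf_cons hbeq,
      gen_indexOf_map hbeq hf l a]
    by_cases hx : x = a
    · rw [if_pos hx, if_pos (congrArg f hx)]
    · rw [if_neg hx, if_neg (fun hh => hx (hf hh))]

end GenBEq

variable [DecidableEq σ] [DecidableEq π]

lemma sum_beq (x y : σ ⊕ π) : (x == y) = true ↔ x = y := by
  rcases x with a | a <;> rcases y with b | b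
  · rw [show ((Sum.inl a : σ ⊕ π) == Sum.inl b) = (a == b) from rfl]; simp
  · rw [show ((Sum.inl a : σ ⊕ π) == Sum.inr b) = false from rfl]; simp
  · rw [show ((Sum.inr a : σ ⊕ π) == Sum.inl b) = false from rfl]; simp
  · rw [show ((Sum.inr a : σ ⊕ π) == Sum.inr b) = (a == b) from rfl]; simp

instance : LawfulBEq (σ ⊕ π) where
  eq_of_beq := fun {a b} h => (sum_beq a b).1 h
  rfl := fun {a} => (sum_beq a a).2 rfl

/-! ### distinctParams lemmas -/

lemma distinctParams_eq_card (W : List (σ ⊕ π)) :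
    distinctParams W = (W.filterMap Sum.getRight?).toFinset.card := by
  rw [distinctParams, List.card_toFinset]

lemma mem_filterMap_getRight {W : List (σ ⊕ π)} {b : π} :
    b ∈ W.filterMap Sum.getRight? ↔ Sum.inr b ∈ W := by
  rw [List.mem_filterMap]
  constructor
  · rintro ⟨x, hx, he⟩
    cases x with
    | inl a => simp at he
    | inr c => simp at he; subst he; exact hx
  · intro h; exact ⟨Sum.inr b, h, rfl⟩

lemma distinctParams_append_inl (xs : List (σ ⊕ π)) (a : σ) :
    distinctParams (xs ++ [Sum.inl a]) = distinctParams xs := by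
  rw [distinctParams_eq_card, distinctParams_eq_card, List.filterMap_append]
  rw [show List.filterMap Sum.getRight? [(Sum.inl a : σ ⊕ π)] = [] from rfl]
  simp

lemma distinctParams_append_inr (xs : List (σ ⊕ π)) (b : π) :
    distinctParams (xs ++ [Sum.inr b]) =
      if Sum.inr b ∈ xs then distinctParams xs else distinctParams xs + 1 := by
  rw [distinctParams_eq_card, distinctParams_eq_card, List.filterMap_append]
  have h1 : List.filterMap (Sum.getRight?) [(Sum.inr b : σ ⊕ π)] = [b] := by simp
  rw [h1, List.toFinset_append]
  by_cases h : (Sum.inr b : σ ⊕ π) ∈ xs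
  · have hb : b ∈ (xs.filterMap Sum.getRight?).toFinset := by
      rw [List.mem_toFinset, mem_filterMap_getRight]; exact h
    rw [if_pos h]
    congr 1
    rw [Finset.union_eq_left]
    simpa using hb
  · have hb : b ∉ (xs.filterMap Sum.getRight?).toFinset := by
      rw [List.mem_toFinset, mem_filterMap_getRight]; exact h
    rw [if_neg h]
    have h2 : (xs.filterMap Sum.getRight?).toFinset ∪ ([b].toFinset : Finset π)
        = insert b (xs.filterMap Sum.getRight?).toFinset := by
      rw [Finset.union_comm, Finset.insert_eq]; simp
    rw [h2, Finset.card_insert_of_notMem hb]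

lemma distinctParams_sublist {V W : List (σ ⊕ π)} (h : List.Sublist V W) :
    distinctParams V ≤ distinctParams W := by
  rw [distinctParams_eq_card, distinctParams_eq_card]
  apply Finset.card_le_card
  intro b hb
  rw [List.mem_toFinset] at hb ⊢
  exact (h.filterMap _).subset hb

/-! ### rotation access -/

lemma rot_get? (T : List (σ ⊕ π)) (k m : ℕ) (hm : m < T.length) :
    (T.rotate (k + 1))[m]? = T[(k + 1 + m) % T.length]? := by
  rw [List.getElem?_rotate hm, Nat.add_comm m (k + 1)]

lemma rotR_eq_rotate {α : Type*} (T : List α) : ∀ i, rotR T i = T.rotate (i * (T.length - 1))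
  | 0 => by simp [rotR]
  | i + 1 => by
    rw [rotR, rotR_eq_rotate T i, rotR1, List.length_rotate, List.rotate_rotate]
    ring_nf

lemma rotR_key (T : List (σ ⊕ π)) {k : ℕ} (hk : k < T.length) :
    rotR T (T.length - (k + 1)) = T.rotate (k + 1) := by
  rw [rotR_eq_rotate]
  rcases Nat.eq_or_lt_of_le (Nat.succ_le_of_lt hk) with h | h
  · have h0 : T.length - (k + 1) = 0 := by omega
    rw [h0, Nat.zero_mul, List.rotate_zero, show k + 1 = T.length from h.symm ▸ rfl,
      List.rotate_length]
  · obtain ⟨j, hj⟩ : ∃ j, T.length = j + k + 2 := ⟨T.length - k - 2, by omega⟩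
    have h1 : T.length - (k + 1) = j + 1 := by omega
    have h2 : T.length - 1 = j + k + 1 := by omega
    have h3 : (j + 1) * (j + k + 1) = T.length * j + (k + 1) := by rw [hj]; ring
    rw [h1, h2, h3, ← List.rotate_rotate, List.rotate_length_mul]

/-! ### core quantities -/

def Dfun (T : List (σ ⊕ π)) (k m : ℕ) : ℕ := distinctParams ((T.rotate (k + 1)).take m)

def Ndist (T : List (σ ⊕ π)) (k : ℕ) (b : π) : ℕ :=
  (T.rotate (k + 1)).idxOf (Sum.inr b) + 1

def cval (T : List (σ ⊕ π)) (k : ℕ) (b : π) : ℕ := Dfun T k (Ndist T k b)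

lemma Ndist_pos (T : List (σ ⊕ π)) (k : ℕ) (b : π) : 1 ≤ Ndist T k b := Nat.le_add_left 1 _

lemma mem_rot (T : List (σ ⊕ π)) {k : ℕ} {b : π} (hk : k < T.length)
    (h : T[k]? = some (Sum.inr b)) : Sum.inr b ∈ T.rotate (k + 1) := by
  have h1 : (T.rotate (k + 1))[T.length - 1]?
      = T[(k + 1 + (T.length - 1)) % T.length]? := rot_get? _ _ _ (by omega)
  have h2 : (k + 1 + (T.length - 1)) % T.length = k := by
    have h3 : k + 1 + (T.length - 1) = T.length + k := by omega
    rw [h3, Nat.add_mod_left, Nat.mod_eq_of_lt hk]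
  exact List.mem_of_getElem? (by rw [h1, h2, h])

lemma Ndist_le (T : List (σ ⊕ π)) {k : ℕ} {b : π} (hk : k < T.length)
    (h : T[k]? = some (Sum.inr b)) : Ndist T k b ≤ T.length := by
  have h1 := gen_indexOf_lt_length sum_beq (mem_rot T hk h)
  rw [List.length_rotate] at h1
  exact h1

lemma get_at_Ndist (T : List (σ ⊕ π)) {k : ℕ} {b : π} (hk : k < T.length)
    (h : T[k]? = some (Sum.inr b)) :
    T[(k + Ndist T k b) % T.length]? = some (Sum.inr b) := by
  have hm := mem_rot T hk h
  have hidx : (T.rotate (k + 1)).idxOf (Sum.inr b) < T.length := by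
    have := gen_indexOf_lt_length sum_beq hm; rwa [List.length_rotate] at this
  have h1 := gen_indexOf_get? sum_beq hm
  rw [rot_get? T k _ hidx] at h1
  have h2 : k + 1 + (T.rotate (k + 1)).idxOf (Sum.inr b) = k + Ndist T k b := by
    rw [Ndist]; omega
  rwa [h2] at h1

/-! ### Dfun step lemmas -/

lemma Dfun_zero (T : List (σ ⊕ π)) (k : ℕ) : Dfun T k 0 = 0 := by
  simp [Dfun, distinctParams]

lemma Dfun_succ_inl (T : List (σ ⊕ π)) {k m : ℕ} {a : σ}
    (h : (T.rotate (k + 1))[m]? = some (Sum.inl a)) :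
    Dfun T k (m + 1) = Dfun T k m := by
  rw [Dfun, Dfun, List.take_succ, h]
  exact distinctParams_append_inl _ a

lemma Dfun_succ_inr (T : List (σ ⊕ π)) {k m : ℕ} {b : π}
    (h : (T.rotate (k + 1))[m]? = some (Sum.inr b)) :
    Dfun T k (m + 1) = if Sum.inr b ∈ (T.rotate (k + 1)).take m
      then Dfun T k m else Dfun T k m + 1 := by
  rw [Dfun, Dfun, List.take_succ, h]
  exact distinctParams_append_inr _ b

lemma Dfun_mono (T : List (σ ⊕ π)) (k : ℕ) {m m' : ℕ} (h : m ≤ m') :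
    Dfun T k m ≤ Dfun T k m' := by
  have h1 : (T.rotate (k + 1)).take m = ((T.rotate (k + 1)).take m').take m := by
    rw [List.take_take, min_eq_left h]
  rw [Dfun, h1]
  exact distinctParams_sublist (List.take_sublist _ _)

lemma mem_take_rot_iff (T : List (σ ⊕ π)) (k m : ℕ) (hm : m ≤ T.length) {x : σ ⊕ π} :
    x ∈ (T.rotate (k + 1)).take m ↔ ∃ d, d < m ∧ T[(k + 1 + d) % T.length]? = some x := by
  constructor
  · intro h
    obtain ⟨j, hj⟩ := List.mem_iff_getElem?.1 h
    have hjl : j < ((T.rotate (k + 1)).take m).length := by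
      rcases List.getElem?_eq_some_iff.1 hj with ⟨h', _⟩; exact h'
    have hjm : j < m := by
      rw [List.length_take] at hjl; omega
    rw [List.getElem?_take_of_lt hjm] at hj
    refine ⟨j, hjm, ?_⟩
    rw [← rot_get? T k j (by omega)]
    exact hj
  · rintro ⟨d, hdm, hd⟩
    have h1 : (T.rotate (k + 1))[d]? = some x := by
      rw [rot_get? T k d (by omega)]; exact hd
    have h2 : ((T.rotate (k + 1)).take m)[d]? = some x := by
      rw [List.getElem?_take_of_lt hdm]; exact h1
    exact List.mem_of_getElem? h2

lemma Dfun_lt_cval (T : List (σ ⊕ π)) {k : ℕ} {b : π} {m : ℕ} (hk : k < T.length)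
    (h : T[k]? = some (Sum.inr b)) (hm : m < Ndist T k b) :
    Dfun T k m < cval T k b := by
  have hmem := mem_rot T hk h
  have hget := gen_indexOf_get? sum_beq hmem
  have hnotmem : Sum.inr b ∉ (T.rotate (k + 1)).take ((T.rotate (k + 1)).idxOf (Sum.inr b)) := by
    intro hmem2
    obtain ⟨j, hj⟩ := List.mem_iff_getElem?.1 hmem2
    have hjl : j < ((T.rotate (k + 1)).take ((T.rotate (k + 1)).idxOf (Sum.inr b))).length := by
      rcases List.getElem?_eq_some_iff.1 hj with ⟨h', _⟩; exact h'
    rw [List.length_take] at hjl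
    have hjm : j < (T.rotate (k + 1)).idxOf (Sum.inr b) := by omega
    rw [List.getElem?_take_of_lt hjm] at hj
    exact gen_get?_ne_of_lt_indexOf sum_beq _ _ j hjm hj
  have hstep : Dfun T k ((T.rotate (k + 1)).idxOf (Sum.inr b) + 1)
      = Dfun T k ((T.rotate (k + 1)).idxOf (Sum.inr b)) + 1 := by
    rw [Dfun_succ_inr T hget, if_neg hnotmem]
  have hmono : Dfun T k m ≤ Dfun T k ((T.rotate (k + 1)).idxOf (Sum.inr b)) := by
    apply Dfun_mono
    rw [Ndist] at hm; omega
  have hcv : cval T k b = Dfun T k ((T.rotate (k + 1)).idxOf (Sum.inr b) + 1) := rfl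
  omega

lemma Ndist_unique (T : List (σ ⊕ π)) {k : ℕ} {b : π} {e : ℕ} (hk : k < T.length)
    (h : T[k]? = some (Sum.inr b)) (he1 : 1 ≤ e) (he2 : e ≤ T.length)
    (hget : T[(k + e) % T.length]? = some (Sum.inr b))
    (hbefore : ∀ d, 1 ≤ d → d < e → T[(k + d) % T.length]? ≠ some (Sum.inr b)) :
    Ndist T k b = e := by
  have hrot : (T.rotate (k + 1))[e - 1]? = some (Sum.inr b) := by
    rw [rot_get? T k (e - 1) (by omega), show k + 1 + (e - 1) = k + e by omega]
    exact hget
  have hle : (T.rotate (k + 1)).idxOf (Sum.inr b) ≤ e - 1 :=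
    gen_indexOf_le_of_get? sum_beq hrot
  have hge : ¬ ((T.rotate (k + 1)).idxOf (Sum.inr b) < e - 1) := by
    intro hlt
    have hmem := mem_rot T hk h
    have hidx := gen_indexOf_get? sum_beq hmem
    rw [rot_get? T k _ (by omega),
      show k + 1 + (T.rotate (k + 1)).idxOf (Sum.inr b)
        = k + ((T.rotate (k + 1)).idxOf (Sum.inr b) + 1) by omega] at hidx
    exact hbefore _ (by omega) (by omega) hidx
  rw [Ndist]; omega

/-! ### alignment -/

def Aligned (S T : List (σ ⊕ π)) : Prop :=
  S.length = T.length ∧ ∀ k, k < T.length →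
    (∃ a, S[k]? = some (Sum.inl a) ∧ T[k]? = some (Sum.inl a)) ∨
    (∃ b c, S[k]? = some (Sum.inr b) ∧ T[k]? = some (Sum.inr c) ∧
      cval S k b = cval T k c)

lemma Aligned.symm {S T : List (σ ⊕ π)} (h : Aligned S T) : Aligned T S := by
  refine ⟨h.1.symm, fun k hk => ?_⟩
  rcases h.2 k (by rw [← h.1]; exact hk) with ⟨a, h1, h2⟩ | ⟨b, c, h1, h2, h3⟩
  · exact Or.inl ⟨a, h2, h1⟩
  · exact Or.inr ⟨c, b, h2, h1, h3.symm⟩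

lemma Aligned.cval_eq {S T : List (σ ⊕ π)} (hA : Aligned S T) {k : ℕ} {b c : π}
    (hk : k < T.length) (hb : S[k]? = some (Sum.inr b)) (hc : T[k]? = some (Sum.inr c)) :
    cval S k b = cval T k c := by
  rcases hA.2 k hk with ⟨a, h1, _⟩ | ⟨b', c', h1, h2, h3⟩
  · rw [hb] at h1; simp at h1
  · rw [hb] at h1; rw [hc] at h2
    have hb' : b' = b := by simpa using h1.symm
    have hc' : c' = c := by simpa using h2.symm
    rw [← hb', ← hc']; exact h3

lemma Aligned.param {S T : List (σ ⊕ π)} (hA : Aligned S T) {k : ℕ} {b : π}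
    (hk : k < T.length) (hb : S[k]? = some (Sum.inr b)) :
    ∃ c, T[k]? = some (Sum.inr c) := by
  rcases hA.2 k hk with ⟨a, h1, _⟩ | ⟨b', c', h1, h2, _⟩
  · rw [hb] at h1; simp at h1
  · exact ⟨c', h2⟩

/-! ### the window-transfer argument -/

lemma mem_window_transfer {S T : List (σ ⊕ π)} (hA : Aligned S T)
    {m : ℕ} (IH : ∀ m', m' ≤ m → ∀ k, Dfun S k m' = Dfun T k m')
    {k : ℕ} (hm : m < T.length) {b c : π}
    (hqS : S[(k + 1 + m) % T.length]? = some (Sum.inr b))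
    (hqT : T[(k + 1 + m) % T.length]? = some (Sum.inr c))
    (hd : ∃ d, d < m ∧ S[(k + 1 + d) % T.length]? = some (Sum.inr b)) :
    ∃ d, d < m ∧ T[(k + 1 + d) % T.length]? = some (Sum.inr c) := by
  classical
  have hlen : S.length = T.length := hA.1
  have hn : 0 < T.length := by omega
  obtain ⟨d1, hd1m, hd1⟩ := hd
  set P : ℕ → Prop := fun d => S[(k + 1 + d) % T.length]? = some (Sum.inr b) with hP
  have hPd1 : P d1 := hd1
  set d0 := Nat.findGreatest P (m - 1) with hd0
  have hPd0 : P d0 := Nat.findGreatest_spec (m := d1) (by omega) hPd1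
  have hd0m : d0 ≤ m - 1 := Nat.findGreatest_le _
  have hmax : ∀ d', d0 < d' → d' ≤ m - 1 → ¬ P d' := by
    intro d' h1 h2
    exact Nat.findGreatest_is_greatest h1 h2
  set r := (k + 1 + d0) % T.length with hr
  have hrn : r < T.length := Nat.mod_lt _ hn
  have hrS : r < S.length := by omega
  set e := m - d0 with he
  have he1 : 1 ≤ e := by omega
  have hem : e ≤ m := by omega
  have hSr : S[r]? = some (Sum.inr b) := hPd0
  have hre : ∀ d, (r + d) % T.length = (k + 1 + (d0 + d)) % T.length := by
    intro d
    rw [hr, Nat.mod_add_mod, Nat.add_assoc]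
  have hS_at : S[(r + e) % S.length]? = some (Sum.inr b) := by
    rw [hlen, hre e, show d0 + e = m by omega]
    exact hqS
  have hS_before : ∀ d, 1 ≤ d → d < e → S[(r + d) % S.length]? ≠ some (Sum.inr b) := by
    intro d h1 h2
    rw [hlen, hre d]
    exact hmax (d0 + d) (by omega) (by omega)
  have hNS : Ndist S r b = e :=
    Ndist_unique S hrS hSr he1 (by omega) hS_at hS_before
  obtain ⟨c1, hTr⟩ := hA.param hrn hSr
  have hcv : cval S r b = cval T r c1 := hA.cval_eq hrn hSr hTr
  have hDe : Dfun S r e = cval S r b := by rw [cval, hNS]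
  have hDe' : Dfun T r e = cval T r c1 := by rw [← IH e hem r, hDe, hcv]
  have hNT : Ndist T r c1 = e := by
    rcases lt_trichotomy (Ndist T r c1) e with hlt | heq | hgt
    · exfalso
      have h3 : Dfun S r (Ndist T r c1) < cval S r b := by
        apply Dfun_lt_cval S hrS hSr
        omega
      have h4 : Dfun T r (Ndist T r c1) = cval T r c1 := rfl
      rw [IH (Ndist T r c1) (by omega) r, h4, ← hcv] at h3
      omega
    · exact heq
    · exfalso
      have h3 : Dfun T r e < cval T r c1 := Dfun_lt_cval T hrn hTr hgt
      omega
  have hT_at := get_at_Ndist T hrn hTr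
  rw [hNT, hre e, show d0 + e = m by omega, hqT] at hT_at
  have hc1 : c = c1 := by simpa using hT_at
  exact ⟨d0, by omega, by rw [hc1]; exact hTr⟩

/-! ### equality of the window-distinct-counts -/

lemma Dfun_eq_of_aligned {S T : List (σ ⊕ π)} (hA : Aligned S T) :
    ∀ m, m ≤ T.length → ∀ k, Dfun S k m = Dfun T k m := by
  have hlen : S.length = T.length := hA.1
  intro m
  induction m using Nat.strong_induction_on with
  | _ m IH0 =>
    intro hm k
    match m with
    | 0 => rw [Dfun_zero, Dfun_zero]
    | m + 1 =>
      have hmn : m < T.length := by omega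
      have IH : ∀ m', m' ≤ m → ∀ k, Dfun S k m' = Dfun T k m' := fun m' h k' =>
        IH0 m' (by omega) (by omega) k'
      have IH' : ∀ m', m' ≤ m → ∀ k, Dfun T k m' = Dfun S k m' := fun m' h k' =>
        (IH m' h k').symm
      have hqq : (k + 1 + m) % T.length < T.length := Nat.mod_lt _ (by omega)
      have hSq : (S.rotate (k + 1))[m]? = S[(k + 1 + m) % T.length]? := by
        rw [rot_get? S k m (by omega), hlen]
      have hTq : (T.rotate (k + 1))[m]? = T[(k + 1 + m) % T.length]? :=
        rot_get? T k m hmn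
      rcases hA.2 _ hqq with ⟨a, h1, h2⟩ | ⟨b, c, h1, h2, _⟩
      · rw [Dfun_succ_inl S (by rw [hSq]; exact h1), Dfun_succ_inl T (by rw [hTq]; exact h2)]
        exact IH m le_rfl k
      · rw [Dfun_succ_inr S (by rw [hSq]; exact h1), Dfun_succ_inr T (by rw [hTq]; exact h2)]
        have hmemiff : (Sum.inr b ∈ (S.rotate (k + 1)).take m)
            ↔ (Sum.inr c ∈ (T.rotate (k + 1)).take m) := by
          rw [mem_take_rot_iff S k m (by omega), mem_take_rot_iff T k m (by omega), hlen]
          constructor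
          · intro hex
            exact mem_window_transfer hA IH hmn h1 h2 hex
          · intro hex
            rw [← hlen] at h1 h2 hex ⊢
            exact mem_window_transfer hA.symm IH' (by omega) h2 h1 hex
        by_cases hmem : Sum.inr b ∈ (S.rotate (k + 1)).take m
        · rw [if_pos hmem, if_pos (hmemiff.1 hmem)]
          exact IH m le_rfl k
        · rw [if_neg hmem, if_neg (fun hc => hmem (hmemiff.2 hc))]
          rw [IH m le_rfl k]

/-! ### transfer of the parameter-equality pattern -/

lemma Ndist_eq_of_aligned {S T : List (σ ⊕ π)} (hA : Aligned S T) {k : ℕ} {b c : π}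
    (hk : k < T.length) (hb : S[k]? = some (Sum.inr b)) (hc : T[k]? = some (Sum.inr c)) :
    Ndist S k b = Ndist T k c := by
  have hlen : S.length = T.length := hA.1
  have hkS : k < S.length := by omega
  have hcv : cval S k b = cval T k c := hA.cval_eq hk hb hc
  have hS_le : Ndist S k b ≤ T.length := by rw [← hlen]; exact Ndist_le S hkS hb
  have hT_le : Ndist T k c ≤ T.length := Ndist_le T hk hc
  have hDS : Dfun S k (Ndist S k b) = cval S k b := rfl
  have hDT : Dfun T k (Ndist T k c) = cval T k c := rfl
  rcases lt_trichotomy (Ndist S k b) (Ndist T k c) with hlt | heq | hgt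
  · exfalso
    have h1 : Dfun T k (Ndist S k b) < cval T k c := Dfun_lt_cval T hk hc hlt
    rw [← Dfun_eq_of_aligned hA _ hS_le k, hDS, hcv] at h1
    omega
  · exact heq
  · exfalso
    have h1 : Dfun S k (Ndist T k c) < cval S k b := Dfun_lt_cval S hkS hb hgt
    rw [Dfun_eq_of_aligned hA _ hT_le k, hDT, ← hcv] at h1
    omega

lemma param_transfer {S T : List (σ ⊕ π)} (hA : Aligned S T) :
    ∀ δ i j b, i < T.length → j < T.length → 1 ≤ δ → δ ≤ T.length →
      (i + δ) % T.length = j → S[i]? = some (Sum.inr b) → S[j]? = some (Sum.inr b) →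
      T[i]? = T[j]? := by
  have hlen : S.length = T.length := hA.1
  intro δ
  induction δ using Nat.strong_induction_on with
  | _ δ IH =>
    intro i j b hi hj hδ1 hδn hij hSi hSj
    have hiS : i < S.length := by omega
    obtain ⟨c, hTi⟩ := hA.param hi hSi
    have hNS_le : Ndist S i b ≤ δ := by
      have hrot : (S.rotate (i + 1))[δ - 1]? = some (Sum.inr b) := by
        rw [rot_get? S i (δ - 1) (by omega), show i + 1 + (δ - 1) = i + δ by omega, hlen, hij]
        exact hSj
      have := gen_indexOf_le_of_get? sum_beq hrot
      rw [Ndist]; omega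
    set e := Ndist S i b with hedef
    have he1 : 1 ≤ e := Ndist_pos S i b
    have hNT : Ndist T i c = e := (Ndist_eq_of_aligned hA hi hSi hTi).symm
    set r := (i + e) % T.length with hr
    have hrn : r < T.length := Nat.mod_lt _ (by omega)
    have hSr : S[r]? = some (Sum.inr b) := by
      have h0 := get_at_Ndist S hiS hSi
      rwa [hlen, ← hedef, ← hr] at h0
    have hTr : T[r]? = some (Sum.inr c) := by
      have h0 := get_at_Ndist T hi hTi
      rwa [hNT, ← hr] at h0
    rcases eq_or_lt_of_le hNS_le with heq | hlt
    · have hrj : r = j := by rw [hr, heq, hij]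
      rw [hTi, ← hrj, hTr]
    · have hstep : (r + (δ - e)) % T.length = j := by
        rw [hr, Nat.mod_add_mod, show i + e + (δ - e) = i + δ by omega, hij]
      have hrec := IH (δ - e) (by omega) r j b hrn hj (by omega) (by omega) hstep hSr hSj
      rw [hTi, ← hrec, hTr]

lemma get_transfer {S T : List (σ ⊕ π)} (hA : Aligned S T) {i j : ℕ}
    (hi : i < T.length) (hj : j < T.length) (hij : S[i]? = S[j]?) :
    T[i]? = T[j]? := by
  have hlen := hA.1
  by_cases heq : i = j
  · rw [heq]
  rcases hA.2 i hi with ⟨a, h1, h2⟩ | ⟨b, c, h1, h2, _⟩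
  · have hSj : S[j]? = some (Sum.inl a) := by rw [← hij]; exact h1
    rcases hA.2 j hj with ⟨a', h1', h2'⟩ | ⟨b', c', h1', h2', _⟩
    · have ha : a' = a := by
        rw [hSj] at h1'; simpa using h1'.symm
      rw [h2, h2', ha]
    · rw [hSj] at h1'; simp at h1'
  · have hSj : S[j]? = some (Sum.inr b) := by rw [← hij]; exact h1
    rcases Nat.lt_or_ge i j with hij2 | hij2
    · exact param_transfer hA (j - i) i j b hi hj (by omega) (by omega)
        (by rw [show i + (j - i) = j by omega, Nat.mod_eq_of_lt hj]) h1 hSj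
    · exact param_transfer hA (j + T.length - i) i j b hi hj (by omega) (by omega)
        (by rw [show i + (j + T.length - i) = j + T.length by omega, Nat.add_mod_right,
          Nat.mod_eq_of_lt hj]) h1 hSj

/-! ### the encoding entries -/

lemma encodeE_length (T : List (σ ⊕ π)) : (encodeE T).length = T.length := by
  simp [encodeE]

lemma encodeE_get?_inl (T : List (σ ⊕ π)) {k : ℕ} {a : σ} (hk : k < T.length)
    (h : T[k]? = some (Sum.inl a)) : (encodeE T)[k]? = some (Sum.inl a) := by
  rw [encodeE, List.getElem?_map, List.getElem?_range hk, Option.map_some, h]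

lemma encodeE_get?_inr (T : List (σ ⊕ π)) {k : ℕ} {b : π} (hk : k < T.length)
    (h : T[k]? = some (Sum.inr b)) :
    (encodeE T)[k]? = some (Sum.inr (cval T k b)) := by
  rw [encodeE, List.getElem?_map, List.getElem?_range hk, Option.map_some, h]
  simp only [rotR_key T hk]
  rfl

lemma encodeE_get?_none (T : List (σ ⊕ π)) {k : ℕ} (hk : T.length ≤ k) :
    (encodeE T)[k]? = none :=
  List.getElem?_eq_none_iff.2 (by rw [encodeE_length]; exact hk)

lemma aligned_of_encode {S T : List (σ ⊕ π)} (h : encodeE S = encodeE T) : Aligned S T := by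
  have hlen : S.length = T.length := by
    have h0 := congrArg List.length h
    rwa [encodeE_length, encodeE_length] at h0
  refine ⟨hlen, fun k hk => ?_⟩
  have hkS : k < S.length := by omega
  have he : (encodeE S)[k]? = (encodeE T)[k]? := by rw [h]
  obtain ⟨x, hx⟩ : ∃ x, S[k]? = some x := ⟨_, List.getElem?_eq_getElem hkS⟩
  obtain ⟨y, hy⟩ : ∃ y, T[k]? = some y := ⟨_, List.getElem?_eq_getElem hk⟩
  cases x with
  | inl a =>
    rw [encodeE_get?_inl S hkS hx] at he
    cases y with
    | inl a' =>
      rw [encodeE_get?_inl T hk hy] at he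
      have ha : a = a' := by simpa using he
      exact Or.inl ⟨a, hx, by rw [hy, ha]⟩
    | inr c =>
      rw [encodeE_get?_inr T hk hy] at he
      simp at he
  | inr b =>
    rw [encodeE_get?_inr S hkS hx] at he
    cases y with
    | inl a' =>
      rw [encodeE_get?_inl T hk hy] at he
      simp at he
    | inr c =>
      rw [encodeE_get?_inr T hk hy] at he
      exact Or.inr ⟨b, c, hx, hy, by simpa using he⟩

/-! ### from alignment to a parameterized match -/

lemma pmatch_of_aligned {S T : List (σ ⊕ π)} (hA : Aligned S T) : PMatch S T := by
  classical
  have hlen : S.length = T.length := hA.1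
  set A : Finset π := (S.filterMap Sum.getRight?).toFinset with hAdef
  have hmemA : ∀ b : π, b ∈ A ↔ Sum.inr b ∈ S := by
    intro b; rw [hAdef, List.mem_toFinset, mem_filterMap_getRight]
  have hex : ∀ b : π, Sum.inr b ∈ S →
      ∃ c : π, ∀ j, j < T.length → S[j]? = some (Sum.inr b) → T[j]? = some (Sum.inr c) := by
    intro b hb
    obtain ⟨i, hi⟩ := List.mem_iff_getElem?.1 hb
    have hiS : i < S.length := by
      rcases List.getElem?_eq_some_iff.1 hi with ⟨h', _⟩; exact h'
    have hiT : i < T.length := by omega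
    obtain ⟨c, hc⟩ := hA.param hiT hi
    refine ⟨c, fun j hj hjb => ?_⟩
    have h2 : T[i]? = T[j]? := get_transfer hA hiT hj (by rw [hi, hjb])
    rw [← h2, hc]
  have hGex : ∀ x : ↥((A : Finset π) : Set π), Sum.inr (x : π) ∈ S := fun x =>
    (hmemA x).1 (Finset.mem_coe.1 x.2)
  set G : ↥((A : Finset π) : Set π) → π := fun x => Classical.choose (hex x (hGex x)) with hGdef
  have hGspec : ∀ (x : ↥((A : Finset π) : Set π)) (j : ℕ), j < T.length →
      S[j]? = some (Sum.inr (x : π)) → T[j]? = some (Sum.inr (G x)) := fun x =>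
    Classical.choose_spec (hex x (hGex x))
  have hGinj : Function.Injective G := by
    intro x y hxy
    obtain ⟨i, hi⟩ := List.mem_iff_getElem?.1 (hGex x)
    obtain ⟨i', hi'⟩ := List.mem_iff_getElem?.1 (hGex y)
    have hiS : i < S.length := by rcases List.getElem?_eq_some_iff.1 hi with ⟨h', _⟩; exact h'
    have hiS' : i' < S.length := by rcases List.getElem?_eq_some_iff.1 hi' with ⟨h', _⟩; exact h'
    have h1 : T[i]? = some (Sum.inr (G x)) := hGspec x i (by omega) hi
    have h2 : T[i']? = some (Sum.inr (G y)) := hGspec y i' (by omega) hi'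
    have h3 : T[i]? = T[i']? := by rw [h1, h2, hxy]
    have h4 : S[i]? = S[i']? := get_transfer hA.symm (by omega) (by omega) h3
    rw [hi, hi'] at h4
    have h5 : (x : π) = (y : π) := by simpa using h4
    exact Subtype.ext h5
  obtain ⟨e, he⟩ : ∃ e : π ≃ π, ∀ x : ↥((A : Finset π) : Set π), e x = G x := by
    rcases finite_or_infinite π with hfin | hinf
    · exact Cardinal.extend_function_finite ⟨G, hGinj⟩ ⟨Equiv.refl π⟩
    · refine Cardinal.extend_function_of_lt ⟨G, hGinj⟩ ?_ ⟨Equiv.refl π⟩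
      have h5 : Cardinal.mk ↥((A : Finset π) : Set π) < Cardinal.aleph0 := Cardinal.mk_lt_aleph0_iff.2 inferInstance
      exact h5.trans_le (Cardinal.aleph0_le_mk π)
  refine ⟨Equiv.sumCongr (Equiv.refl σ) e, fun a => rfl, ?_⟩
  apply List.ext_getElem?
  intro k
  rw [List.getElem?_map]
  by_cases hk : k < T.length
  · rcases hA.2 k hk with ⟨a, h1, h2⟩ | ⟨b, c, h1, h2, _⟩
    · rw [h1, h2]; rfl
    · rw [h1]
      have hbA : b ∈ A := (hmemA b).2 (List.mem_of_getElem? h1)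
      have hGb : T[k]? = some (Sum.inr (G ⟨b, Finset.mem_coe.2 hbA⟩)) :=
        hGspec ⟨b, Finset.mem_coe.2 hbA⟩ k hk h1
      rw [hGb, Option.map_some]
      have hc : e b = G ⟨b, Finset.mem_coe.2 hbA⟩ := he ⟨b, Finset.mem_coe.2 hbA⟩
      show some (Sum.inr (e b)) = _
      rw [hc]
  · push_neg at hk
    have h1 : S[k]? = none := List.getElem?_eq_none_iff.2 (by omega)
    have h2 : T[k]? = none := List.getElem?_eq_none_iff.2 hk
    rw [h1, h2]; rfl

/-! ### forward direction -/

lemma encode_eq_of_pmatch {S T : List (σ ⊕ π)} (h : PMatch S T) : encodeE S = encodeE T := by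
  obtain ⟨f, hfix, hmap⟩ := h
  subst hmap
  have hexg : ∀ b : π, ∃ c, f (Sum.inr b) = Sum.inr c := by
    intro b
    cases hfb : f (Sum.inr b) with
    | inl a =>
      exfalso
      have h0 := f.injective (hfb.trans (hfix a).symm)
      simp at h0
    | inr c => exact ⟨c, rfl⟩
  choose g hgdef using hexg
  have hfinj : Function.Injective (⇑f) := f.injective
  have hginj : Function.Injective g := by
    intro b b' hh
    have h2 : f (Sum.inr b) = f (Sum.inr b') := by rw [hgdef, hgdef, hh]
    simpa using hfinj h2
  have hdp : ∀ V : List (σ ⊕ π), distinctParams (V.map f) = distinctParams V := by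
    intro V
    rw [distinctParams_eq_card, distinctParams_eq_card]
    have h1 : (V.map f).filterMap Sum.getRight? = (V.filterMap Sum.getRight?).map g := by
      rw [List.filterMap_map, List.map_filterMap]
      congr 1
      funext x
      cases x with
      | inl a => simp only [Function.comp_apply, hfix a]; rfl
      | inr b => simp only [Function.comp_apply, hgdef b]; rfl
    rw [h1]
    have h2 : ((V.filterMap Sum.getRight?).map g).toFinset
        = (V.filterMap Sum.getRight?).toFinset.image g := by
      ext c; simp
    rw [h2, Finset.card_image_of_injective _ hginj]
  apply List.ext_getElem?
  intro k
  by_cases hk : k < S.length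
  · have hk2 : k < (S.map f).length := by rwa [List.length_map]
    obtain ⟨x, hx⟩ : ∃ x, S[k]? = some x := ⟨_, List.getElem?_eq_getElem hk⟩
    have hx2 : (S.map f)[k]? = some (f x) := by rw [List.getElem?_map, hx]; rfl
    cases x with
    | inl a =>
      rw [encodeE_get?_inl S hk hx, encodeE_get?_inl (S.map f) hk2 (by rw [hx2, hfix])]
    | inr b =>
      rw [encodeE_get?_inr S hk hx, encodeE_get?_inr (S.map f) hk2 (by rw [hx2, hgdef])]
      have hcv : cval (S.map f) k (g b) = cval S k b := by
        rw [cval, cval, Ndist, Ndist, Dfun, Dfun]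
        have hrot : (S.map f).rotate (k + 1) = (S.rotate (k + 1)).map f :=
          (List.map_rotate f S (k + 1)).symm
        rw [hrot, ← hgdef, gen_indexOf_map sum_beq hfinj, ← List.map_take, hdp]
      rw [hcv]
  · push_neg at hk
    rw [encodeE_get?_none S hk, encodeE_get?_none (S.map f) (by rwa [List.length_map])]

end PMEAux


/-- For any p-strings `S` and `T`, `S ≈ T` iff `⟦S⟧ = ⟦T⟧`. -/
theorem pmatch_iff_encode_eq [DecidableEq σ] [DecidableEq π]
    (S T : List (σ ⊕ π)) :
    PMatch S T ↔ encodeE S = encodeE T :=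
  ⟨PMEAux.encode_eq_of_pmatch, fun h => PMEAux.pmatch_of_aligned (PMEAux.aligned_of_encode h)⟩
end

section
/- For any p-string T and any i ≥ 0, ⟦Rot(T,i)⟧ = Rot(⟦T⟧, i). -/
/-! Common framework: parameterized strings over static alphabet `σ` and
parameter alphabet `π`.  A p-string is a `List (σ ⊕ π)`. -/

variable {σ π : Type*}

lemma rotR1_length {α : Type*} (W : List α) : (rotR1 W).length = W.length :=
  List.length_rotate _ _

lemma rotR_length {α : Type*} (W : List α) (i : ℕ) : (rotR W i).length = W.length := by
  induction i with
  | zero => rfl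
  | succ n ih => rw [rotR, rotR1_length, ih]

lemma rotR_rotR1 {α : Type*} (W : List α) (m : ℕ) : rotR (rotR1 W) m = rotR W (m + 1) := by
  induction m with
  | zero => rfl
  | succ n ih => rw [rotR, ih]; rfl

lemma rotR_eq_rotate {α : Type*} (W : List α) (i : ℕ) :
    rotR W i = W.rotate (i * (W.length - 1)) := by
  induction i with
  | zero => simp [rotR]
  | succ n ih =>
    rw [rotR, rotR1, ih, List.length_rotate, List.rotate_rotate]
    ring_nf

lemma rotR_self_length {α : Type*} (W : List α) : rotR W W.length = W := by
  rw [rotR_eq_rotate]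
  exact List.rotate_length_mul W _

lemma encodeE_length [DecidableEq σ] [DecidableEq π] (T : List (σ ⊕ π)) :
    (encodeE T).length = T.length := by simp [encodeE]

lemma encodeE_rotR1 [DecidableEq σ] [DecidableEq π] (T : List (σ ⊕ π)) :
    encodeE (rotR1 T) = rotR1 (encodeE T) := by
  apply List.ext_getElem?
  intro k
  by_cases hk : k < T.length
  · have hn : 0 < T.length := lt_of_le_of_lt (Nat.zero_le k) hk
    have hk' : (k + (T.length - 1)) % T.length < T.length := Nat.mod_lt _ hn
    have hL : (rotR1 T).length = T.length := rotR1_length T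
    have hRHS : rotR1 (encodeE T) = (encodeE T).rotate (T.length - 1) := by
      rw [rotR1, encodeE_length]
    rw [hRHS, List.getElem?_rotate (by rw [encodeE_length]; exact hk)]
    rw [encodeE_length]
    have hkL : k < (rotR1 T).length := hL ▸ hk
    simp only [encodeE, List.getElem?_map, List.getElem?_range hk', List.getElem?_range hkL,
      Option.map_some]
    have hget : (rotR1 T)[k]? = T[(k + (T.length - 1)) % T.length]? := by
      rw [rotR1, List.getElem?_rotate hk]
    have hrot : rotR (rotR1 T) (T.length - (k + 1)) =
        rotR T (T.length - ((k + (T.length - 1)) % T.length + 1)) := by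
      rw [rotR_rotR1]
      rcases Nat.eq_zero_or_pos k with rfl | hkpos
      · have h1 : (0 + (T.length - 1)) % T.length = T.length - 1 := by
          rw [Nat.zero_add, Nat.mod_eq_of_lt (by omega)]
        rw [h1, show T.length - (0 + 1) + 1 = T.length by omega, rotR_self_length,
          Nat.sub_self]
        rfl
      · have h1 : (k + (T.length - 1)) % T.length = k - 1 := by
          rw [show k + (T.length - 1) = (k - 1) + T.length by omega,
            Nat.add_mod_right, Nat.mod_eq_of_lt (by omega)]
        rw [h1]
        congr 1
        omega
    rw [hget]
    simp only [hL, hrot]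
  · rw [List.getElem?_eq_none, List.getElem?_eq_none]
    · rw [rotR1, List.length_rotate, encodeE_length]; omega
    · rw [encodeE_length, rotR1_length]; omega

/-- For any p-string `T` and any `i ≥ 0`,
`⟦Rot(T, i)⟧ = Rot(⟦T⟧, i)`. -/
theorem encode_rotR [DecidableEq σ] [DecidableEq π]
    (T : List (σ ⊕ π)) (i : ℕ) :
    encodeE (rotR T i) = rotR (encodeE T) i := by
  induction i with
  | zero => rfl
  | succ n ih => rw [rotR, encodeE_rotR1, ih]; rfl
end

section
/- Let T be a p-string of length n ending with a special static character $ that occurs nowhere else in T. For every 1 ≤ i ≤ n, letting x = L_T[i] and j = LF_T(i), it holds that F_T[j] = x and the number of occurrences of x in F_T[1:j] equals the number of occurrences of x in L_T[1:i]; i.e., LF_T(i) is the position of the (|L_T[1:i]|_x)-th occurrence of x in F_T, and symmetrically, letting y = F_T[j], LF_T⁻¹(j) is the position of the (|F_T[1:j]|_y)-th occurrence of y in L_T. -/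
/-! Common framework: parameterized strings over static alphabet `σ` and
parameter alphabet `π`.  A p-string is a `List (σ ⊕ π)`. -/

variable {σ π : Type*}

def List.get? {α : Type*} (l : List α) (n : ℕ) : Option α := l[n]?

theorem List.get?_eq_getElem? {α : Type*} (l : List α) (n : ℕ) : l.get? n = l[n]? := rfl

theorem List.get?_eq_none {α : Type*} {l : List α} {n : ℕ} : l.get? n = none ↔ l.length ≤ n :=
  List.getElem?_eq_none_iff

theorem List.ext_get? {α : Type*} {l₁ l₂ : List α} (h : ∀ n, l₁.get? n = l₂.get? n) : l₁ = l₂ :=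
  List.ext_getElem? h

theorem List.indexOf_get? {α : Type*} [DecidableEq α] {a : α} {l : List α} (h : a ∈ l) :
    l.get? (l.idxOf a) = some a := by
  rw [List.get?_eq_getElem?, List.getElem?_eq_getElem (List.idxOf_lt_length_of_mem h)]
  simp

namespace Aux
variable [DecidableEq σ] [DecidableEq π]

def pe (T : List (σ ⊕ π)) (k : ℕ) : σ ⊕ ℕ∞ :=
  match T.get? k with
  | none => Sum.inr ⊤
  | some (Sum.inl a) => Sum.inl a
  | some (Sum.inr b) =>
    match ((List.range k).filter fun j => T.get? j = some (Sum.inr b)).max? with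
    | none => Sum.inr ⊤
    | some j => Sum.inr ((k - j : ℕ) : ℕ∞)

theorem prevEnc_eq_map (T : List (σ ⊕ π)) :
    prevEnc T = (List.range T.length).map (pe T) := rfl

theorem prevEnc_length (T : List (σ ⊕ π)) : (prevEnc T).length = T.length := by
  simp [prevEnc_eq_map]

theorem prevEnc_get? (T : List (σ ⊕ π)) (k : ℕ) (hk : k < T.length) :
    (prevEnc T).get? k = some (pe T k) := by
  simp [prevEnc_eq_map, List.get?_eq_getElem?, hk]

theorem pe_inl {T : List (σ ⊕ π)} {k : ℕ} {a : σ} (h : T.get? k = some (Sum.inl a)) :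
    pe T k = Sum.inl a := by
  unfold pe; rw [h]

omit [DecidableEq σ] [DecidableEq π] in
theorem mem_take_iff {T : List (σ ⊕ π)} {k : ℕ} {c : σ ⊕ π} :
    c ∈ T.take k ↔ ∃ j < k, T.get? j = some c := by
  constructor
  · intro h
    obtain ⟨j, hj, he⟩ := List.mem_iff_getElem.mp h
    have hjk : j < k := lt_of_lt_of_le hj (by simp [List.length_take])
    have hjT : j < T.length := by
      have := hj; rw [List.length_take] at this; omega
    refine ⟨j, hjk, ?_⟩
    rw [List.get?_eq_getElem?, List.getElem?_eq_getElem hjT]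
    rw [List.getElem_take] at he
    simp [he]
  · rintro ⟨j, hjk, he⟩
    have hjT : j < T.length := by
      by_contra hh
      rw [List.get?_eq_getElem?, List.getElem?_eq_none (by omega)] at he
      exact nomatch he
    rw [List.get?_eq_getElem?, List.getElem?_eq_getElem hjT] at he
    have : (T.take k)[j]'(by simp [List.length_take]; omega) = c := by
      rw [List.getElem_take]; exact Option.some.inj he
    exact this ▸ List.getElem_mem _

theorem pe_inr_not_mem {T : List (σ ⊕ π)} {k : ℕ} {b : π}
    (h : T.get? k = some (Sum.inr b)) (hm : (Sum.inr b : σ ⊕ π) ∉ T.take k) :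
    pe T k = Sum.inr ⊤ := by
  have h0 : ((List.range k).filter fun j => T.get? j = some (Sum.inr b)) = [] := by
    rw [List.filter_eq_nil_iff]
    intro j hj
    simp only [List.mem_range] at hj
    simp only [decide_eq_true_eq]
    intro he
    exact hm (mem_take_iff.mpr ⟨j, hj, he⟩)
  unfold pe; rw [h]
  show (match ((List.range k).filter fun j => T.get? j = some (Sum.inr b)).max? with
    | none => (Sum.inr ⊤ : σ ⊕ ℕ∞)
    | some j => Sum.inr ((k - j : ℕ) : ℕ∞)) = Sum.inr ⊤
  rw [h0]; rfl

theorem pe_spec {T : List (σ ⊕ π)} {k j : ℕ} {b : π}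
    (h : T.get? k = some (Sum.inr b)) (hj : j < k) (hje : T.get? j = some (Sum.inr b))
    (hr : ∀ t, j < t → t < k → T.get? t ≠ some (Sum.inr b)) :
    pe T k = Sum.inr ((k - j : ℕ) : ℕ∞) := by
  have hmax : ((List.range k).filter fun t => T.get? t = some (Sum.inr b)).max? = some j := by
    rw [List.max?_eq_some_iff]
    constructor
    · simp only [List.mem_filter, List.mem_range, decide_eq_true_eq]
      exact ⟨hj, hje⟩
    · intro t ht
      simp only [List.mem_filter, List.mem_range, decide_eq_true_eq] at ht
      by_contra hc
      exact hr t (by omega) ht.1 ht.2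
  unfold pe; rw [h]
  show (match ((List.range k).filter fun t => T.get? t = some (Sum.inr b)).max? with
    | none => (Sum.inr ⊤ : σ ⊕ ℕ∞)
    | some j => Sum.inr ((k - j : ℕ) : ℕ∞)) = Sum.inr ((k - j : ℕ) : ℕ∞)
  rw [hmax]

theorem exists_rightmost {T : List (σ ⊕ π)} {k : ℕ} {b : π}
    (hm : (Sum.inr b : σ ⊕ π) ∈ T.take k) :
    ∃ j < k, T.get? j = some (Sum.inr b) ∧
      ∀ t, j < t → t < k → T.get? t ≠ some (Sum.inr b) := by
  obtain ⟨j0, hj0, he0⟩ := mem_take_iff.mp hm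
  set l := (List.range k).filter fun t => T.get? t = some (Sum.inr b) with hl
  have hne : l ≠ [] := by
    intro h0
    have : j0 ∈ l := by
      rw [hl, List.mem_filter]
      simp only [List.mem_range, decide_eq_true_eq]
      exact ⟨hj0, he0⟩
    simp [h0] at this
  cases hmax : l.max? with
  | none => exact absurd (List.max?_eq_none_iff.mp hmax) hne
  | some j =>
    have hj := (List.max?_eq_some_iff).mp hmax
    rw [hl, List.mem_filter] at hj
    simp only [List.mem_range, decide_eq_true_eq] at hj
    refine ⟨j, hj.1.1, hj.1.2, ?_⟩
    intro t hjt htk he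
    have : t ∈ l := by
      rw [hl, List.mem_filter]
      simp only [List.mem_range, decide_eq_true_eq]
      exact ⟨htk, he⟩
    have := hj.2 t this
    omega

theorem pe_inr_mem {T : List (σ ⊕ π)} {k : ℕ} {b : π}
    (h : T.get? k = some (Sum.inr b)) (hm : (Sum.inr b : σ ⊕ π) ∈ T.take k) :
    ∃ v : ℕ, 1 ≤ v ∧ v ≤ k ∧ pe T k = Sum.inr (v : ℕ∞) := by
  obtain ⟨j, hj, hje, hr⟩ := exists_rightmost hm
  exact ⟨k - j, by omega, by omega, pe_spec h hj hje hr⟩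

theorem pe_cons_zero_inl (a : σ) (U : List (σ ⊕ π)) :
    pe (Sum.inl a :: U) 0 = Sum.inl a := pe_inl rfl

theorem pe_cons_zero_inr (b : π) (U : List (σ ⊕ π)) :
    pe (Sum.inr b :: U) 0 = Sum.inr ⊤ := pe_inr_not_mem rfl (by simp)

omit [DecidableEq σ] [DecidableEq π] in
theorem cons_get?_succ (c : σ ⊕ π) (U : List (σ ⊕ π)) (j : ℕ) :
    (c :: U).get? (j+1) = U.get? j := rfl

-- c arbitrary, U[j] static
theorem pe_cons_inl {U : List (σ ⊕ π)} {j : ℕ} {a : σ} (c : σ ⊕ π)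
    (h : U.get? j = some (Sum.inl a)) :
    pe (c :: U) (j+1) = pe U j := by
  rw [pe_inl (T := c :: U) (by rw [cons_get?_succ, h]), pe_inl h]

-- U[j] parameter occurring before j in U
theorem pe_cons_mem {U : List (σ ⊕ π)} {j : ℕ} {b : π} (c : σ ⊕ π)
    (h : U.get? j = some (Sum.inr b)) (hm : (Sum.inr b : σ ⊕ π) ∈ U.take j) :
    pe (c :: U) (j+1) = pe U j := by
  obtain ⟨t, ht, hte, htr⟩ := exists_rightmost hm
  rw [pe_spec h ht hte htr]
  have h1 : (c :: U).get? (j+1) = some (Sum.inr b) := by rw [cons_get?_succ, h]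
  have h2 : (c :: U).get? (t+1) = some (Sum.inr b) := by rw [cons_get?_succ, hte]
  have := pe_spec h1 (by omega) h2 (by
    intro s hs1 hs2 hse
    cases s with
    | zero => omega
    | succ s' =>
      rw [cons_get?_succ] at hse
      exact htr s' (by omega) (by omega) hse)
  rw [this]
  congr 2
  omega

-- U[j] parameter not occurring before, head different
theorem pe_cons_not_mem_ne {U : List (σ ⊕ π)} {j : ℕ} {b : π} {c : σ ⊕ π}
    (h : U.get? j = some (Sum.inr b)) (hm : (Sum.inr b : σ ⊕ π) ∉ U.take j)
    (hc : c ≠ Sum.inr b) :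
    pe (c :: U) (j+1) = pe U j := by
  rw [pe_inr_not_mem h hm]
  refine pe_inr_not_mem (by rw [cons_get?_succ, h]) ?_
  intro hmem
  rw [List.take_succ_cons] at hmem
  rcases List.mem_cons.mp hmem with h1 | h1
  · exact hc h1.symm
  · exact hm h1

-- U[j] parameter not occurring before, head equal: first occurrence moves
theorem pe_cons_not_mem_eq {U : List (σ ⊕ π)} {j : ℕ} {b : π}
    (h : U.get? j = some (Sum.inr b)) (hm : (Sum.inr b : σ ⊕ π) ∉ U.take j) :
    pe (Sum.inr b :: U) (j+1) = Sum.inr ((j+1 : ℕ) : ℕ∞) := by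
  have := pe_spec (T := Sum.inr b :: U) (k := j+1) (j := 0) (b := b)
    (by rw [cons_get?_succ, h]) (by omega) rfl (by
      intro t ht1 ht2 hte
      cases t with
      | zero => omega
      | succ t' =>
        rw [cons_get?_succ] at hte
        exact hm (mem_take_iff.mpr ⟨t', by omega, hte⟩))
  rw [this]; norm_num

-- pe of a list with last element appended agrees with pe of the prefix
theorem pe_append_last {U : List (σ ⊕ π)} (c : σ ⊕ π) {j : ℕ} (hj : j < U.length) :
    pe (U ++ [c]) j = pe U j := by
  classical
  have hg : ∀ t, t < U.length → (U ++ [c]).get? t = U.get? t := by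
    intro t ht
    rw [List.get?_eq_getElem?, List.get?_eq_getElem?, List.getElem?_append_left ht]
  have htk : (U ++ [c]).take j = U.take j :=
    List.take_append_of_le_length (by omega)
  cases hU : U.get? j with
  | none =>
    rw [List.get?_eq_getElem?, List.getElem?_eq_none_iff] at hU
    omega
  | some x =>
    have hU' : (U ++ [c]).get? j = some x := by rw [hg j hj, hU]
    cases x with
    | inl a => rw [pe_inl hU', pe_inl hU]
    | inr b =>
      rcases Classical.em ((Sum.inr b : σ ⊕ π) ∈ U.take j) with hm | hm
      · obtain ⟨t, ht, hte, htr⟩ := exists_rightmost hm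
        rw [pe_spec hU ht hte htr, pe_spec hU' ht (by rw [hg t (by omega), hte]) (by
          intro s hs1 hs2 hse
          exact htr s hs1 hs2 (by rw [← hg s (by omega), hse]))]
      · rw [pe_inr_not_mem hU hm, pe_inr_not_mem hU' (htk ▸ hm)]

def countInf (X : List (σ ⊕ π)) (t : ℕ) : ℕ :=
  ((List.range t).filter fun j => pe X j = Sum.inr ⊤).length

theorem countInf_succ (X : List (σ ⊕ π)) (t : ℕ) :
    countInf X (t+1) = countInf X t + (if pe X t = Sum.inr ⊤ then 1 else 0) := by
  unfold countInf
  rw [List.range_succ, List.filter_append]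
  simp only [List.length_append, List.filter_cons, List.filter_nil]
  by_cases h : pe X t = Sum.inr ⊤ <;> simp [h]

theorem countInf_mono (X : List (σ ⊕ π)) {t t' : ℕ} (h : t ≤ t') :
    countInf X t ≤ countInf X t' := by
  induction t' with
  | zero => have h0 : t = 0 := by omega
            rw [h0]
  | succ u ih =>
    rcases Nat.eq_or_lt_of_le h with h1 | h1
    · rw [h1]
    · exact le_trans (ih (by omega)) (by rw [countInf_succ]; exact Nat.le_add_right _ _)

theorem countInf_congr {X Y : List (σ ⊕ π)} {t : ℕ}
    (h : ∀ j, j < t → pe X j = pe Y j) : countInf X t = countInf Y t := by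
  unfold countInf
  congr 1
  refine List.filter_congr ?_
  intro j hj
  rw [List.mem_range] at hj
  rw [h j hj]

theorem countInf_top_succ {X : List (σ ⊕ π)} {t : ℕ} (h : pe X t = Sum.inr ⊤) :
    countInf X (t+1) = countInf X t + 1 := by
  rw [countInf_succ, if_pos h]

theorem pe_top_iff {X : List (σ ⊕ π)} {t : ℕ} {b : π}
    (h : X.get? t = some (Sum.inr b)) :
    pe X t = Sum.inr ⊤ ↔ (Sum.inr b : σ ⊕ π) ∉ X.take t := by
  constructor
  · intro hp hm
    obtain ⟨v, _, _, hv⟩ := pe_inr_mem h hm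
    rw [hv] at hp
    have : (v : ℕ∞) = ⊤ := Sum.inr.inj hp
    simp at this
  · exact pe_inr_not_mem h

def distinctParams' [DecidableEq π] (W : List (σ ⊕ π)) : ℕ :=
  (W.filterMap Sum.getRight?).dedup.length

theorem distinctParams'_eq_countInf {X : List (σ ⊕ π)} {t : ℕ} (h : t ≤ X.length) :
    distinctParams' (X.take t) = countInf X t := by
  induction t with
  | zero => simp [distinctParams', countInf]
  | succ u ih =>
    have hu : u < X.length := by omega
    rw [countInf_succ, ← ih (by omega)]
    unfold distinctParams'
    rw [← List.card_toFinset, ← List.card_toFinset]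
    rw [List.take_succ, List.getElem?_eq_getElem hu]
    have hget : X.get? u = some (X[u]) := by
      rw [List.get?_eq_getElem?, List.getElem?_eq_getElem hu]
    cases hc : X[u] with
    | inl a =>
      rw [hc] at hget
      have : pe X u = Sum.inl a := pe_inl hget
      rw [this]
      simp [Sum.getRight?, List.filterMap_cons]
    | inr b =>
      rw [hc] at hget
      simp only [Option.toList_some, List.filterMap_append, List.toFinset_append]
      have : List.filterMap Sum.getRight? [(Sum.inr b : σ ⊕ π)] = [b] := by
        simp [Sum.getRight?]
      rw [this]
      have hbmem : b ∈ (X.take u).filterMap Sum.getRight? ↔ (Sum.inr b : σ ⊕ π) ∈ X.take u := by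
        rw [List.mem_filterMap]
        constructor
        · rintro ⟨x, hx, hx2⟩
          cases x with
          | inl a => simp [Sum.getRight?] at hx2
          | inr b' => simp [Sum.getRight?] at hx2; rwa [hx2] at hx
        · intro hx
          exact ⟨Sum.inr b, hx, by simp [Sum.getRight?]⟩
      rcases Classical.em ((Sum.inr b : σ ⊕ π) ∈ X.take u) with hm | hm
      · rw [if_neg (by rw [pe_top_iff hget]; simp [hm])]
        have hb : b ∈ (X.take u).filterMap Sum.getRight? := hbmem.mpr hm
        rw [show ([b] : List π).toFinset = {b} by simp,
          Finset.union_eq_left.mpr (Finset.singleton_subset_iff.mpr (List.mem_toFinset.mpr hb))]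
        omega
      · rw [if_pos ((pe_top_iff hget).mpr hm)]
        have hb : b ∉ ((X.take u).filterMap Sum.getRight?).toFinset := by
          simp only [List.mem_toFinset]
          exact fun hx => hm (hbmem.mp hx)
        rw [show ([b] : List π).toFinset = {b} by simp, Finset.union_comm,
          ← Finset.insert_eq, Finset.card_insert_of_notMem hb]

omit [DecidableEq σ] [DecidableEq π] in
theorem lex_iff_exists {α : Type*} {r : α → α → Prop} :
    ∀ {X Y : List α}, X.length = Y.length →
      (List.Lex r X Y ↔ ∃ k, (∀ j, j < k → X.get? j = Y.get? j) ∧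
        ∃ a b, X.get? k = some a ∧ Y.get? k = some b ∧ r a b)
  | [], [] => by
    intro _
    constructor
    · intro h; cases h
    · rintro ⟨k, _, a, b, ha, _⟩
      simp [List.get?] at ha
  | [], (y :: ys) => by intro h; simp at h
  | (x :: xs), [] => by intro h; simp at h
  | (x :: xs), (y :: ys) => by
    intro h
    simp only [List.length_cons, Nat.succ_inj] at h
    constructor
    · intro hl
      cases hl with
      | rel hr => exact ⟨0, by omega, x, y, rfl, rfl, hr⟩
      | cons hl' =>
        obtain ⟨k, hpre, a, b, ha, hb, hr⟩ := (lex_iff_exists h).mp hl'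
        exact ⟨k+1, by
          intro j hj
          cases j with
          | zero => rfl
          | succ j' => exact hpre j' (by omega), a, b, ha, hb, hr⟩
    · rintro ⟨k, hpre, a, b, ha, hb, hr⟩
      cases k with
      | zero =>
        simp only [List.get?] at ha hb
        cases ha; cases hb
        exact List.Lex.rel hr
      | succ k' =>
        have h0 : x = y := by
          have := hpre 0 (by omega)
          simpa [List.get?] using this
        cases h0
        exact List.Lex.cons ((lex_iff_exists h).mpr ⟨k', fun j hj => hpre (j+1) (by omega),
          a, b, ha, hb, hr⟩)

section PV
variable [LinearOrder σ]

theorem pvlt_irrefl (x : σ ⊕ ℕ∞) : ¬ pvlt x x := by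
  cases x <;> simp [pvlt]

theorem pvlt_asymm {x y : σ ⊕ ℕ∞} (h : pvlt x y) (h' : pvlt y x) : False := by
  cases x with
  | inl a =>
    cases y with
    | inl b => simp only [pvlt] at h h'; exact absurd h' (not_lt.mpr h.le)
    | inr v => simp only [pvlt] at h'
  | inr u =>
    cases y with
    | inl b => simp only [pvlt] at h
    | inr v => simp only [pvlt] at h h'; exact absurd h' (not_lt.mpr h.le)

theorem lex_pvlt_irrefl : ∀ (X : List (σ ⊕ ℕ∞)), ¬ List.Lex pvlt X X
  | [] => by intro h; cases h
  | (x :: xs) => by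
    intro h
    cases h with
    | rel hr => exact pvlt_irrefl x hr
    | cons h' => exact lex_pvlt_irrefl xs h'

theorem lex_pvlt_asymm : ∀ {X Y : List (σ ⊕ ℕ∞)},
    List.Lex pvlt X Y → List.Lex pvlt Y X → False
  | [], _, h, h' => by cases h; cases h'
  | (x :: xs), (y :: ys), h, h' => by
    cases h with
    | rel hr =>
      cases h' with
      | rel hr' => exact pvlt_asymm hr hr'
      | cons h'' => exact pvlt_irrefl x hr
    | cons h2 =>
      cases h' with
      | rel hr' => exact pvlt_irrefl x hr'
      | cons h'' => exact lex_pvlt_asymm h2 h''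

end PV

end Aux

namespace Aux

theorem rotR1_length {α : Type*} (W : List α) : (rotR1 W).length = W.length := by
  simp [rotR1]

theorem rotR_length {α : Type*} (W : List α) (k : ℕ) : (rotR W k).length = W.length := by
  induction k with
  | zero => rfl
  | succ k ih => simp [rotR, rotR1_length, ih]

theorem rotR_eq_rotate {α : Type*} (W : List α) (k : ℕ) :
    rotR W k = W.rotate (k * (W.length - 1)) := by
  induction k with
  | zero => simp [rotR]
  | succ k ih =>
    simp only [rotR, ih, rotR1, List.rotate_rotate, List.length_rotate]
    ring_nf

theorem rotR1_append {α : Type*} (U : List α) (c : α) :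
    rotR1 (U ++ [c]) = c :: U := by
  have h : (U ++ [c]).length - 1 = U.length := by simp
  rw [rotR1, h, List.rotate_eq_drop_append_take (by simp), List.drop_left' rfl,
    List.take_left' rfl]
  rfl

theorem rotR_rotR1 {α : Type*} (W : List α) (h : 1 ≤ W.length) :
    rotR (rotR1 W) (W.length - 1) = W := by
  have hl : (rotR1 W).length = W.length := rotR1_length W
  rw [rotR_eq_rotate, hl, rotR1, List.rotate_rotate]
  have he : W.length - 1 + (W.length - 1) * (W.length - 1) = W.length * (W.length - 1) := by
    cases W.length with
    | zero => simp
    | succ n => simp; ring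
  rw [he, List.rotate_length_mul]

variable [DecidableEq σ] [DecidableEq π]

def ee (T : List (σ ⊕ π)) (k : ℕ) : σ ⊕ ℕ :=
  match T.get? k with
  | none => Sum.inr 0
  | some (Sum.inl a) => Sum.inl a
  | some (Sum.inr b) =>
    let R := rotR T (T.length - (k + 1))
    Sum.inr (distinctParams (R.take (R.idxOf (Sum.inr b) + 1)))

theorem encodeE_eq_map (T : List (σ ⊕ π)) :
    encodeE T = (List.range T.length).map (ee T) := rfl

def lastSym (W : List (σ ⊕ π)) : σ ⊕ ℕ :=
  match W.getLast? with
  | some (Sum.inl a) => Sum.inl a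
  | some (Sum.inr b) => Sum.inr (distinctParams (W.take (W.idxOf (Sum.inr b) + 1)))
  | none => Sum.inr 0

theorem get1_encodeE [Inhabited σ] {W : List (σ ⊕ π)} {i : ℕ} (h1 : 1 ≤ i)
    (h2 : i ≤ W.length) : get1 (encodeE W) i = ee W (i - 1) := by
  rw [get1, encodeE_eq_map, List.getD_eq_getElem?_getD, List.getElem?_map,
    List.getElem?_range (by omega)]
  rfl

theorem E1 [Inhabited σ] {W : List (σ ⊕ π)} (h : 1 ≤ W.length) :
    get1 (encodeE W) W.length = lastSym W := by
  rw [get1_encodeE h (le_refl _)]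
  have hne : W ≠ [] := by intro h0; rw [h0] at h; simp at h
  have hg : W.get? (W.length - 1) = W.getLast? := by
    rw [List.get?_eq_getElem?, List.getLast?_eq_getElem?]
  have h0 : W.length - (W.length - 1 + 1) = 0 := by omega
  unfold ee
  rw [hg, h0]
  cases hL : W.getLast? with
  | none => rw [List.getLast?_eq_getLast hne] at hL; exact nomatch hL
  | some c =>
    cases c with
    | inl a => rw [lastSym, hL]
    | inr b =>
      rw [lastSym, hL]
      show Sum.inr (distinctParams ((rotR W 0).take ((rotR W 0).idxOf (Sum.inr b) + 1)))
        = Sum.inr (distinctParams (W.take (W.idxOf (Sum.inr b) + 1)))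
      rfl

theorem E2 [Inhabited σ] {W : List (σ ⊕ π)} (h : 1 ≤ W.length) :
    get1 (encodeE (rotR1 W)) 1 = lastSym W := by
  have hne : W ≠ [] := by intro h0; rw [h0] at h; simp at h
  have hl : (rotR1 W).length = W.length := rotR1_length W
  rw [get1_encodeE (le_refl 1) (by omega)]
  have hW : W.dropLast ++ [W.getLast hne] = W := List.dropLast_append_getLast hne
  have hrot : rotR1 W = W.getLast hne :: W.dropLast := by
    conv_lhs => rw [← hW]
    exact rotR1_append _ _
  have hg : (rotR1 W).get? 0 = some (W.getLast hne) := by rw [hrot]; rfl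
  have hR : rotR (rotR1 W) ((rotR1 W).length - (0 + 1)) = W := by
    rw [hl]; exact rotR_rotR1 W h
  unfold ee
  rw [hg]
  cases hc : W.getLast hne with
  | inl a => rw [lastSym, List.getLast?_eq_getLast hne, hc]
  | inr b =>
    rw [lastSym, List.getLast?_eq_getLast hne, hc]
    show Sum.inr (distinctParams ((rotR (rotR1 W) ((rotR1 W).length - (0+1))).take
      ((rotR (rotR1 W) ((rotR1 W).length - (0+1))).idxOf (Sum.inr b) + 1)))
      = Sum.inr (distinctParams (W.take (W.idxOf (Sum.inr b) + 1)))
    rw [hR]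

end Aux

namespace Aux
variable [DecidableEq σ] [DecidableEq π]

theorem beq_congr (y x : σ ⊕ π) : (y == x) = (@BEq.beq _ instBEqOfDecidableEq y x) := by
  have h1 : (y == x) = true ↔ y = x := by
    cases y with
    | inl a => cases x with
      | inl b => show (a == b) = true ↔ _ ; simp
      | inr b => show false = true ↔ _ ; simp
    | inr a => cases x with
      | inl b => show false = true ↔ _ ; simp
      | inr b => show (a == b) = true ↔ _ ; simp
  have h2 : (@BEq.beq _ instBEqOfDecidableEq y x) = true ↔ y = x := by
    simp [instBEqOfDecidableEq]
  rw [Bool.eq_iff_iff, h1, h2]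

instance instLawfulBEqSumAux : LawfulBEq (σ ⊕ π) where
  eq_of_beq {a b} h := by rw [beq_congr] at h; simpa using h
  rfl {a} := by rw [beq_congr]; simp

theorem idx_eq (x : σ ⊕ π) : ∀ (l : List (σ ⊕ π)),
    l.idxOf x = @List.idxOf _ instBEqOfDecidableEq x l
  | [] => rfl
  | (y :: l) => by
    rw [List.idxOf_cons, @List.idxOf_cons _ y l x instBEqOfDecidableEq]
    rw [beq_congr, idx_eq x l]

theorem idx_lt_length {l : List (σ ⊕ π)} {a : σ ⊕ π} (h : a ∈ l) :
    l.idxOf a < l.length := by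
  exact List.idxOf_lt_length_iff.mpr h

theorem idx_get? {l : List (σ ⊕ π)} {a : σ ⊕ π} (h : a ∈ l) :
    l.get? (l.idxOf a) = some a := by
  rw [idx_eq]; exact List.indexOf_get? h

theorem idx_append_mem {l₁ : List (σ ⊕ π)} (l₂ : List (σ ⊕ π)) {a : σ ⊕ π} (h : a ∈ l₁) :
    (l₁ ++ l₂).idxOf a = l₁.idxOf a := by
  exact List.idxOf_append_of_mem h

theorem idx_append_not_mem {l₁ : List (σ ⊕ π)} (l₂ : List (σ ⊕ π)) {a : σ ⊕ π} (h : a ∉ l₁) :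
    (l₁ ++ l₂).idxOf a = l₁.length + l₂.idxOf a := by
  exact List.idxOf_append_of_notMem h

theorem idx_cons_self (a : σ ⊕ π) (l : List (σ ⊕ π)) : (a :: l).idxOf a = 0 := by
  exact List.idxOf_cons_self

omit [DecidableEq σ] [DecidableEq π] in
theorem not_mem_take_indexOf' {α : Type*} [DecidableEq α] {l : List α} {a : α} :
    a ∉ l.take (@List.idxOf _ instBEqOfDecidableEq a l) := by
  induction l with
  | nil => simp
  | cons x xs ih =>
    by_cases h : x = a
    · simp [List.idxOf_cons_eq _ h]
    · rw [List.idxOf_cons_ne _ h, List.take_succ_cons]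
      intro hmem
      rcases List.mem_cons.mp hmem with h1 | h1
      · exact h h1.symm
      · exact ih h1

theorem not_mem_take_idx {l : List (σ ⊕ π)} {a : σ ⊕ π} :
    a ∉ l.take (l.idxOf a) := by
  rw [idx_eq]; exact not_mem_take_indexOf'

/-- head-static: pe of cons agrees with pe of tail (shifted) -/
theorem pe_cons_static {U : List (σ ⊕ π)} {a : σ} {j : ℕ} (hj : j < U.length) :
    pe (Sum.inl a :: U) (j+1) = pe U j := by
  cases hU : U.get? j with
  | none =>
    rw [List.get?_eq_getElem?, List.getElem?_eq_none_iff] at hU; omega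
  | some x =>
    cases x with
    | inl a' => exact pe_cons_inl _ hU
    | inr b =>
      rcases Classical.em ((Sum.inr b : σ ⊕ π) ∈ U.take j) with hm | hm
      · exact pe_cons_mem _ hU hm
      · exact pe_cons_not_mem_ne hU hm (by simp)

/-- head-param: pe of cons agrees with pe of tail except at the first occurrence
of the head parameter -/
theorem pe_cons_param_ne {U : List (σ ⊕ π)} {b : π} {j : ℕ} (hj : j < U.length)
    (hne : j ≠ U.idxOf (Sum.inr b) ∨ (Sum.inr b : σ ⊕ π) ∉ U) :
    pe (Sum.inr b :: U) (j+1) = pe U j := by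
  cases hU : U.get? j with
  | none =>
    rw [List.get?_eq_getElem?, List.getElem?_eq_none_iff] at hU; omega
  | some x =>
    cases x with
    | inl a' => exact pe_cons_inl _ hU
    | inr b' =>
      rcases Classical.em ((Sum.inr b' : σ ⊕ π) ∈ U.take j) with hm | hm
      · exact pe_cons_mem _ hU hm
      · by_cases hbb : b' = b
        · subst hbb
          -- then j is the first occurrence of b in U: j = indexOf
          have hmem : (Sum.inr b' : σ ⊕ π) ∈ U := by
            have := mem_take_iff (T := U) (k := j+1) (c := (Sum.inr b' : σ ⊕ π))
            exact List.mem_of_mem_take (this.mpr ⟨j, by omega, hU⟩)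
          have hidx : U.idxOf (Sum.inr b') = j := by
            have hlt : U.idxOf (Sum.inr b') < U.length := idx_lt_length hmem
            have hge := idx_get? hmem
            rcases lt_trichotomy (U.idxOf (Sum.inr b')) j with h1 | h1 | h1
            · exact absurd (mem_take_iff.mpr ⟨_, h1, hge⟩) hm
            · exact h1
            · -- j < indexOf: but U[j] = inr b', so j' position in take indexOf
              exact absurd (mem_take_iff.mpr ⟨j, h1, hU⟩) not_mem_take_idx
          rcases hne with h2 | h2
          · exact absurd hidx.symm h2
          · exact absurd hmem h2
        · exact pe_cons_not_mem_ne hU hm (by simp [hbb]; intro h'; exact hbb (h'.symm ▸ rfl))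

theorem pe_cons_param_eq {U : List (σ ⊕ π)} {b : π} (hm : (Sum.inr b : σ ⊕ π) ∈ U) :
    pe (Sum.inr b :: U) (U.idxOf (Sum.inr b) + 1)
      = Sum.inr ((U.idxOf (Sum.inr b) + 1 : ℕ) : ℕ∞) :=
  pe_cons_not_mem_eq (idx_get? hm) not_mem_take_idx

theorem distinctParams_eq (W : List (σ ⊕ π)) : distinctParams W = distinctParams' W := rfl

/-- first-occurrence data when the last-position parameter occurs in the prefix -/
theorem plc_mem {U : List (σ ⊕ π)} {b : π} (hm : (Sum.inr b : σ ⊕ π) ∈ U) :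
    U.idxOf (Sum.inr b) < U.length ∧
    pe U (U.idxOf (Sum.inr b)) = Sum.inr ⊤ ∧
    countInf U (U.idxOf (Sum.inr b)) + 1 =
      distinctParams ((U ++ [Sum.inr b]).take ((U ++ [Sum.inr b]).idxOf (Sum.inr b) + 1)) := by
  have hlt : U.idxOf (Sum.inr b) < U.length := idx_lt_length hm
  have hg : U.get? (U.idxOf (Sum.inr b)) = some (Sum.inr b) := idx_get? hm
  have htop : pe U (U.idxOf (Sum.inr b)) = Sum.inr ⊤ :=
    pe_inr_not_mem hg not_mem_take_idx
  refine ⟨hlt, htop, ?_⟩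
  rw [idx_append_mem _ hm,
    List.take_append_of_le_length (by omega), distinctParams_eq,
    distinctParams'_eq_countInf (by omega), countInf_top_succ htop]

theorem plc_not_mem {U : List (σ ⊕ π)} {b : π} (hm : (Sum.inr b : σ ⊕ π) ∉ U) :
    countInf U U.length + 1 =
      distinctParams ((U ++ [Sum.inr b]).take ((U ++ [Sum.inr b]).idxOf (Sum.inr b) + 1)) := by
  rw [idx_append_not_mem _ hm, idx_cons_self]
  have hW : (U ++ [Sum.inr b]).take (U.length + 0 + 1) = U ++ [Sum.inr b] := by
    rw [List.take_of_length_le (by simp)]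
  rw [hW, distinctParams_eq,
    show distinctParams' (U ++ [Sum.inr b]) = distinctParams' ((U ++ [Sum.inr b]).take (U.length + 1)) by
      rw [List.take_of_length_le (by simp)],
    distinctParams'_eq_countInf (by simp)]
  have hlen : (U ++ [Sum.inr b]).length = U.length + 1 := by simp
  have hg : (U ++ [Sum.inr b]).get? U.length = some (Sum.inr b) := by
    rw [List.get?_eq_getElem?, List.getElem?_append_right (le_refl _)]
    simp
  have htk : (U ++ [Sum.inr b]).take U.length = U := List.take_left' rfl
  have htop : pe (U ++ [Sum.inr b]) U.length = Sum.inr ⊤ :=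
    pe_inr_not_mem hg (by rw [htk]; exact hm)
  rw [countInf_top_succ htop]
  congr 1
  exact countInf_congr (fun j hj => (pe_append_last _ hj).symm)

end Aux

namespace Aux
section Key
variable [LinearOrder σ] [DecidableEq π]

theorem pvlt_top_left {y : σ ⊕ ℕ∞} : ¬ pvlt (Sum.inr ⊤) y := by
  cases y with
  | inl a => simp [pvlt]
  | inr v => simp [pvlt]

theorem countInf_top_inj {X : List (σ ⊕ π)} {j1 j2 : ℕ}
    (h1 : pe X j1 = Sum.inr ⊤) (h2 : pe X j2 = Sum.inr ⊤)
    (h3 : countInf X j1 = countInf X j2) : j1 = j2 := by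
  rcases lt_trichotomy j1 j2 with h | h | h
  · have := countInf_mono X (show j1 + 1 ≤ j2 by omega)
    rw [countInf_top_succ h1] at this; omega
  · exact h
  · have := countInf_mono X (show j2 + 1 ≤ j1 by omega)
    rw [countInf_top_succ h2] at this; omega

theorem pe_cases {U : List (σ ⊕ π)} {k : ℕ} (hk : k < U.length) :
    (∃ a, pe U k = Sum.inl a) ∨ pe U k = Sum.inr ⊤ ∨
      ∃ v : ℕ, v ≤ k ∧ pe U k = Sum.inr ((v : ℕ) : ℕ∞) := by
  cases hU : U.get? k with
  | none => rw [List.get?_eq_getElem?, List.getElem?_eq_none_iff] at hU; omega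
  | some x =>
    cases x with
    | inl a => exact Or.inl ⟨a, pe_inl hU⟩
    | inr b =>
      rcases Classical.em ((Sum.inr b : σ ⊕ π) ∈ U.take k) with hm | hm
      · obtain ⟨v, _, hv2, hv3⟩ := pe_inr_mem hU hm
        exact Or.inr (Or.inr ⟨v, hv2, hv3⟩)
      · exact Or.inr (Or.inl (pe_inr_not_mem hU hm))

theorem key {W W' : List (σ ⊕ π)} (hlen : W.length = W'.length)
    (h1 : 1 ≤ W.length) (hx : lastSym W = lastSym W')
    (hlex : List.Lex pvlt (prevEnc W) (prevEnc W')) :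
    List.Lex pvlt (prevEnc (rotR1 W)) (prevEnc (rotR1 W')) ∨
      prevEnc (rotR1 W) = prevEnc (rotR1 W') := by
  have h1' : 1 ≤ W'.length := by omega
  have hne : W ≠ [] := List.ne_nil_of_length_pos (by omega)
  have hne' : W' ≠ [] := List.ne_nil_of_length_pos (by omega)
  obtain ⟨U, c, hW⟩ : ∃ U c, W = U ++ [c] :=
    ⟨W.dropLast, W.getLast hne, (List.dropLast_append_getLast hne).symm⟩
  obtain ⟨U', c', hW'⟩ : ∃ U' c', W' = U' ++ [c'] :=
    ⟨W'.dropLast, W'.getLast hne', (List.dropLast_append_getLast hne').symm⟩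
  have hUlen : U.length = W.length - 1 := by rw [hW]; simp
  have hUlen' : U'.length = W'.length - 1 := by rw [hW']; simp
  have hgl : W.getLast? = some c := by rw [hW]; exact List.getLast?_concat
  have hgl' : W'.getLast? = some c' := by rw [hW']; exact List.getLast?_concat
  have hgW : W.get? (W.length - 1) = some c := by
    rw [List.get?_eq_getElem?, ← List.getLast?_eq_getElem?, hgl]
  have hgW' : W'.get? (W'.length - 1) = some c' := by
    rw [List.get?_eq_getElem?, ← List.getLast?_eq_getElem?, hgl']
  have hr : rotR1 W = c :: U := by rw [hW]; exact rotR1_append U c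
  have hr' : rotR1 W' = c' :: U' := by rw [hW']; exact rotR1_append U' c'
  have hUW : ∀ j, j < U.length → pe W j = pe U j := by
    intro j hj; rw [hW]; exact pe_append_last c hj
  have hUW' : ∀ j, j < U'.length → pe W' j = pe U' j := by
    intro j hj; rw [hW']; exact pe_append_last c' hj
  -- extract the first difference
  obtain ⟨k, hpre, a0, b0, ha0, hb0, hrel0⟩ :=
    (lex_iff_exists (by rw [prevEnc_length, prevEnc_length, hlen])).mp hlex
  have hk : k < W.length := by
    by_contra h
    rw [List.get?_eq_none.mpr (by rw [prevEnc_length]; omega)] at ha0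
    exact nomatch ha0
  have ha0' : a0 = pe W k := by
    rw [prevEnc_get? W k hk] at ha0; exact (Option.some.inj ha0).symm
  have hb0' : b0 = pe W' k := by
    rw [prevEnc_get? W' k (by omega)] at hb0; exact (Option.some.inj hb0).symm
  rw [ha0', hb0'] at hrel0
  have hprek : ∀ j, j < k → pe W j = pe W' j := by
    intro j hj
    have := hpre j hj
    rw [prevEnc_get? W j (by omega), prevEnc_get? W' j (by omega)] at this
    exact Option.some.inj this
  -- builders
  have hRlen : (rotR1 W).length = W.length := rotR1_length W
  have hRlen' : (rotR1 W').length = W'.length := rotR1_length W'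
  have buildLex : ∀ K, K < W.length → (∀ t, t < K → pe (rotR1 W) t = pe (rotR1 W') t) →
      pvlt (pe (rotR1 W) K) (pe (rotR1 W') K) →
      List.Lex pvlt (prevEnc (rotR1 W)) (prevEnc (rotR1 W')) := by
    intro K hK hp hrK
    refine (lex_iff_exists (by rw [prevEnc_length, prevEnc_length, hRlen, hRlen', hlen])).mpr
      ⟨K, ?_, _, _, prevEnc_get? _ K (by omega), prevEnc_get? _ K (by omega), hrK⟩
    intro j hj
    rw [prevEnc_get? _ j (by omega), prevEnc_get? _ j (by omega), hp j hj]
  have buildEq : (∀ t, t < W.length → pe (rotR1 W) t = pe (rotR1 W') t) →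
      prevEnc (rotR1 W) = prevEnc (rotR1 W') := by
    intro hp
    apply List.ext_get?
    intro t
    by_cases ht : t < W.length
    · rw [prevEnc_get? _ t (by omega), prevEnc_get? _ t (by omega), hp t ht]
    · rw [List.get?_eq_none.mpr (by rw [prevEnc_length, rotR1_length]; omega),
        List.get?_eq_none.mpr (by rw [prevEnc_length, rotR1_length]; omega)]
  cases c with
  | inl a =>
    -- static last character: both last characters equal `inl a`
    have hc' : c' = Sum.inl a := by
      unfold lastSym at hx
      rw [hgl, hgl'] at hx
      cases c' with
      | inl a' =>
        have hx2 : (Sum.inl a : σ ⊕ ℕ) = Sum.inl a' := hx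
        rw [Sum.inl.injEq] at hx2
        rw [hx2]
      | inr b' =>
        exact absurd hx (by simp)
    subst hc'
    have hkn : k < W.length - 1 := by
      rcases lt_or_ge k (W.length - 1) with h | h
      · exact h
      · exfalso
        have hkeq : k = W.length - 1 := by omega
        have e1 : pe W k = Sum.inl a := by rw [hkeq]; exact pe_inl hgW
        have e2 : pe W' k = Sum.inl a := by rw [hkeq, hlen]; exact pe_inl hgW'
        rw [e1, e2] at hrel0
        simp only [pvlt] at hrel0
        exact lt_irrefl a hrel0
    refine Or.inl (buildLex (k+1) (by omega) ?_ ?_)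
    · intro t ht
      rw [hr, hr']
      cases t with
      | zero => rw [pe_cons_zero_inl, pe_cons_zero_inl]
      | succ j =>
        have hj : j < k := by omega
        rw [pe_cons_static (by omega), pe_cons_static (by omega),
          ← hUW j (by omega), ← hUW' j (by omega)]
        exact hprek j hj
    · rw [hr, hr', pe_cons_static (by omega), pe_cons_static (by omega),
        ← hUW k (by omega), ← hUW' k (by omega)]
      exact hrel0
  | inr b =>
    -- parameter last character
    obtain ⟨b', rfl⟩ : ∃ b', c' = Sum.inr b' := by
      cases c' with
      | inl a' =>
        exfalso
        unfold lastSym at hx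
        rw [hgl, hgl'] at hx
        exact absurd hx (by simp)
      | inr b' => exact ⟨b', rfl⟩
    have hxm : distinctParams (W.take (W.idxOf (Sum.inr b) + 1)) =
        distinctParams (W'.take (W'.idxOf (Sum.inr b') + 1)) := by
      unfold lastSym at hx
      rw [hgl, hgl'] at hx
      have hx2 : (Sum.inr (distinctParams (W.take (W.idxOf (Sum.inr b) + 1))) : σ ⊕ ℕ)
        = Sum.inr (distinctParams (W'.take (W'.idxOf (Sum.inr b') + 1))) := hx
      exact Sum.inr.inj hx2
    set m := distinctParams (W.take (W.idxOf (Sum.inr b) + 1)) with hmdef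
    have HmemU : (Sum.inr b : σ ⊕ π) ∈ U → U.idxOf (Sum.inr b) < U.length ∧
        pe U (U.idxOf (Sum.inr b)) = Sum.inr ⊤ ∧
        countInf U (U.idxOf (Sum.inr b)) + 1 = m := by
      intro h
      obtain ⟨p1, p2, p3⟩ := plc_mem h
      rw [← hW] at p3
      exact ⟨p1, p2, p3⟩
    have HnotU : (Sum.inr b : σ ⊕ π) ∉ U → countInf U U.length + 1 = m := by
      intro h
      have := plc_not_mem h
      rw [← hW] at this
      exact this
    have HmemU' : (Sum.inr b' : σ ⊕ π) ∈ U' → U'.idxOf (Sum.inr b') < U'.length ∧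
        pe U' (U'.idxOf (Sum.inr b')) = Sum.inr ⊤ ∧
        countInf U' (U'.idxOf (Sum.inr b')) + 1 = m := by
      intro h
      obtain ⟨p1, p2, p3⟩ := plc_mem h
      rw [← hW', ← hxm] at p3
      exact ⟨p1, p2, p3⟩
    have HnotU' : (Sum.inr b' : σ ⊕ π) ∉ U' → countInf U' U'.length + 1 = m := by
      intro h
      have := plc_not_mem h
      rw [← hW', ← hxm] at this
      exact this
    by_cases hkn : k < W.length - 1
    · -- first difference strictly inside the common prefix part
      have hsk : countInf U' k = countInf U k := by
        refine countInf_congr ?_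
        intro j hj
        rw [← hUW j (by omega), ← hUW' j (by omega)]
        exact (hprek j hj).symm
      have hpeUk : pe W k = pe U k := hUW k (by omega)
      have hpeUk' : pe W' k = pe U' k := hUW' k (by omega)
      rw [hpeUk, hpeUk'] at hrel0
      have hUktop : pe U k ≠ Sum.inr ⊤ := by
        intro h
        rw [h] at hrel0
        exact pvlt_top_left hrel0
      by_cases hs : m ≤ countInf U k
      · -- the first occurrences of b, b' lie inside the common prefix and coincide
        have hbU : (Sum.inr b : σ ⊕ π) ∈ U := by
          by_contra h
          have h2 := HnotU h
          have := countInf_mono U (show k ≤ U.length by omega)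
          omega
        have hbU' : (Sum.inr b' : σ ⊕ π) ∈ U' := by
          by_contra h
          have h2 := HnotU' h
          have h3 := countInf_mono U' (show k ≤ U'.length by omega)
          omega
        obtain ⟨q1, q2, q3⟩ := HmemU hbU
        obtain ⟨q1', q2', q3'⟩ := HmemU' hbU'
        have hlk : U.idxOf (Sum.inr b) < k := by
          by_contra h
          have := countInf_mono U (show k ≤ U.idxOf (Sum.inr b) by omega)
          omega
        have hlk' : U'.idxOf (Sum.inr b') < k := by
          by_contra h
          have := countInf_mono U' (show k ≤ U'.idxOf (Sum.inr b') by omega)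
          omega
        have hpeq : ∀ j, j < k → pe U j = pe U' j := by
          intro j hj
          rw [← hUW j (by omega), ← hUW' j (by omega)]
          exact hprek j hj
        have hleq : U.idxOf (Sum.inr b) = U'.idxOf (Sum.inr b') := by
          refine countInf_top_inj (X := U') ?_ q2' ?_
          · rw [← hpeq _ hlk]; exact q2
          · rw [← countInf_congr (fun j hj => hpeq j (by omega))]
            omega
        refine Or.inl (buildLex (k+1) (by omega) ?_ ?_)
        · intro t ht
          rw [hr, hr']
          cases t with
          | zero => rw [pe_cons_zero_inr, pe_cons_zero_inr]
          | succ j =>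
            have hj : j < k := by omega
            by_cases hjl : j = U.idxOf (Sum.inr b)
            · rw [hjl, pe_cons_param_eq hbU, hleq, pe_cons_param_eq hbU']
            · rw [pe_cons_param_ne (by omega) (Or.inl hjl),
                pe_cons_param_ne (by omega) (Or.inl (by rw [← hleq]; exact hjl)),
                hpeq j hj]
        · rw [hr, hr',
            pe_cons_param_ne (by omega) (Or.inl (by omega)),
            pe_cons_param_ne (by omega) (Or.inl (by rw [← hleq]; omega))]
          exact hrel0
      · -- fewer than m infinities before k: no modification below k
        push_neg at hs
        have hnomodU : ∀ j, j < k → ¬((Sum.inr b : σ ⊕ π) ∈ U ∧ j = U.idxOf (Sum.inr b)) := by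
          rintro j hj ⟨hmem, rfl⟩
          obtain ⟨q1, q2, q3⟩ := HmemU hmem
          have := countInf_mono U (show U.idxOf (Sum.inr b) + 1 ≤ k by omega)
          rw [countInf_top_succ q2] at this
          omega
        have hnomodU' : ∀ j, j < k → ¬((Sum.inr b' : σ ⊕ π) ∈ U' ∧ j = U'.idxOf (Sum.inr b')) := by
          rintro j hj ⟨hmem, rfl⟩
          obtain ⟨q1', q2', q3'⟩ := HmemU' hmem
          have := countInf_mono U' (show U'.idxOf (Sum.inr b') + 1 ≤ k by omega)
          rw [countInf_top_succ q2'] at this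
          omega
        refine Or.inl (buildLex (k+1) (by omega) ?_ ?_)
        · intro t ht
          rw [hr, hr']
          cases t with
          | zero => rw [pe_cons_zero_inr, pe_cons_zero_inr]
          | succ j =>
            have hj : j < k := by omega
            have e1 : pe (Sum.inr b :: U) (j+1) = pe U j := by
              refine pe_cons_param_ne (by omega) ?_
              rcases Classical.em ((Sum.inr b : σ ⊕ π) ∈ U) with hm2 | hm2
              · exact Or.inl (fun hh => hnomodU j hj ⟨hm2, hh⟩)
              · exact Or.inr hm2
            have e2 : pe (Sum.inr b' :: U') (j+1) = pe U' j := by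
              refine pe_cons_param_ne (by omega) ?_
              rcases Classical.em ((Sum.inr b' : σ ⊕ π) ∈ U') with hm2 | hm2
              · exact Or.inl (fun hh => hnomodU' j hj ⟨hm2, hh⟩)
              · exact Or.inr hm2
            rw [e1, e2, ← hUW j (by omega), ← hUW' j (by omega)]
            exact hprek j hj
        · rw [hr, hr']
          have e1 : pe (Sum.inr b :: U) (k+1) = pe U k := by
            refine pe_cons_param_ne (by omega) ?_
            rcases Classical.em ((Sum.inr b : σ ⊕ π) ∈ U) with hm2 | hm2
            · refine Or.inl ?_
              intro hh
              obtain ⟨q1, q2, q3⟩ := HmemU hm2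
              exact hUktop (hh ▸ q2)
            · exact Or.inr hm2
          rw [e1]
          -- right side: either also unmodified, or the modification makes it even bigger
          rcases Classical.em ((Sum.inr b' : σ ⊕ π) ∈ U' ∧ k = U'.idxOf (Sum.inr b')) with hmod | hmod
          · obtain ⟨hmem', hkl'⟩ := hmod
            rw [hkl', pe_cons_param_eq hmem', ← hkl']
            -- pe U k is inl or a finite number ≤ k < k+1
            rcases pe_cases (show k < U.length by omega) with ⟨a, ha⟩ | htop | ⟨v, hv1, hv2⟩
            · rw [ha]; exact trivial
            · exact absurd htop hUktop
            · rw [hv2]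
              show ((v : ℕ) : ℕ∞) < ((k+1 : ℕ) : ℕ∞)
              exact_mod_cast (by omega : v < k + 1)
          · have e2 : pe (Sum.inr b' :: U') (k+1) = pe U' k := by
              refine pe_cons_param_ne (by omega) ?_
              rcases Classical.em ((Sum.inr b' : σ ⊕ π) ∈ U') with hm2 | hm2
              · exact Or.inl (fun hh => hmod ⟨hm2, hh⟩)
              · exact Or.inr hm2
            rw [e2]
            exact hrel0
    · -- the first difference is at the very last position
      have hkeq : k = W.length - 1 := by omega
      have hpeq : ∀ j, j < W.length - 1 → pe U j = pe U' j := by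
        intro j hj
        rw [← hUW j (by omega), ← hUW' j (by omega)]
        exact hprek j (by omega)
      have hcnt : countInf U U.length = countInf U' U'.length := by
        rw [hUlen, hUlen', ← hlen]
        exact countInf_congr (fun j hj => hpeq j (by omega))
      rcases Classical.em ((Sum.inr b : σ ⊕ π) ∈ U) with hbU | hbU <;>
        rcases Classical.em ((Sum.inr b' : σ ⊕ π) ∈ U') with hbU' | hbU'
      · -- both appear earlier: the rotated prev-encodings coincide
        obtain ⟨q1, q2, q3⟩ := HmemU hbU
        obtain ⟨q1', q2', q3'⟩ := HmemU' hbU'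
        have hleq : U.idxOf (Sum.inr b) = U'.idxOf (Sum.inr b') := by
          refine countInf_top_inj (X := U') ?_ q2' ?_
          · rw [← hpeq _ (by omega)]; exact q2
          · rw [← countInf_congr (fun j hj => hpeq j (by omega))]
            omega
        refine Or.inr (buildEq ?_)
        intro t ht
        rw [hr, hr']
        cases t with
        | zero => rw [pe_cons_zero_inr, pe_cons_zero_inr]
        | succ j =>
          have hj : j < U.length := by omega
          by_cases hjl : j = U.idxOf (Sum.inr b)
          · rw [hjl, pe_cons_param_eq hbU,
              show U.idxOf (Sum.inr b) = U'.idxOf (Sum.inr b') from hleq,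
              pe_cons_param_eq hbU']
          · rw [pe_cons_param_ne (by omega) (Or.inl hjl),
              pe_cons_param_ne (by omega) (Or.inl (by rw [← hleq]; exact hjl)),
              hpeq j (by omega)]
      · -- b occurs earlier, b' does not: impossible by counting
        exfalso
        obtain ⟨q1, q2, q3⟩ := HmemU hbU
        have h2 := HnotU' hbU'
        have := countInf_mono U (show U.idxOf (Sum.inr b) + 1 ≤ U.length by omega)
        rw [countInf_top_succ q2] at this
        omega
      · -- b' occurs earlier, b does not: impossible by counting
        exfalso
        obtain ⟨q1', q2', q3'⟩ := HmemU' hbU'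
        have h2 := HnotU hbU
        have := countInf_mono U' (show U'.idxOf (Sum.inr b') + 1 ≤ U'.length by omega)
        rw [countInf_top_succ q2'] at this
        omega
      · -- neither occurs earlier: again the rotated prev-encodings coincide
        refine Or.inr (buildEq ?_)
        intro t ht
        rw [hr, hr']
        cases t with
        | zero => rw [pe_cons_zero_inr, pe_cons_zero_inr]
        | succ j =>
          have hj : j < U.length := by omega
          rw [pe_cons_param_ne (by omega) (Or.inr hbU),
            pe_cons_param_ne (by omega) (Or.inr hbU'),
            hpeq j (by omega)]

end Key
end Aux


namespace Aux
section Final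
variable [LinearOrder σ] [DecidableEq π] [Inhabited σ]

theorem larr_eq_lastSym (T : List (σ ⊕ π)) (RA : Fin T.length ≃ Fin T.length)
    (i : Fin T.length) :
    Larr T RA i = lastSym (rotR T ((RA i).val + 1)) := by
  have h1 : 1 ≤ (rotR T ((RA i).val + 1)).length := by
    rw [rotR_length]; have := i.isLt; omega
  have h2 := E1 (W := rotR T ((RA i).val + 1)) h1
  rw [rotR_length] at h2
  exact h2

theorem farr_LF (T : List (σ ⊕ π)) (RA LF : Fin T.length ≃ Fin T.length)
    (hLF : IsLF T RA LF) (i : Fin T.length) :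
    Farr T RA (LF i) = lastSym (rotR T ((RA i).val + 1)) := by
  have h1 : 1 ≤ (rotR T ((RA i).val + 1)).length := by
    rw [rotR_length]; have := i.isLt; omega
  rw [Farr, ← hLF i]
  exact E2 h1

theorem main_mono (T : List (σ ⊕ π)) (RA : Fin T.length ≃ Fin T.length)
    (hRA : IsRA T RA) (LF : Fin T.length ≃ Fin T.length) (hLF : IsLF T RA LF)
    (i i' : Fin T.length) (hii : i < i') (hLL : Larr T RA i = Larr T RA i') :
    LF i < LF i' := by
  have hpos : 1 ≤ T.length := by have := i.isLt; omega
  have hlast : lastSym (rotR T ((RA i).val + 1)) = lastSym (rotR T ((RA i').val + 1)) := by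
    rw [← larr_eq_lastSym, ← larr_eq_lastSym, hLL]
  have hlex := hRA i i' hii
  have hkey := key (W := rotR T ((RA i).val + 1)) (W' := rotR T ((RA i').val + 1))
    (by rw [rotR_length, rotR_length]) (by rw [rotR_length]; omega) hlast hlex
  have hre : rotR1 (rotR T ((RA i).val + 1)) = rotR T ((RA (LF i)).val + 1) := hLF i
  have hre' : rotR1 (rotR T ((RA i').val + 1)) = rotR T ((RA (LF i')).val + 1) := hLF i'
  rw [hre, hre'] at hkey
  rcases lt_trichotomy (LF i) (LF i') with h | h | h
  · exact h
  · exact absurd (LF.injective h) (ne_of_lt hii)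
  · exfalso
    have hlex2 := hRA (LF i') (LF i) h
    rcases hkey with hk | hk
    · exact lex_pvlt_asymm hk hlex2
    · rw [hk] at hlex2
      exact lex_pvlt_irrefl _ hlex2

theorem card_eq (T : List (σ ⊕ π)) (RA : Fin T.length ≃ Fin T.length)
    (hRA : IsRA T RA) (LF : Fin T.length ≃ Fin T.length) (hLF : IsLF T RA LF)
    (i : Fin T.length) :
    (Finset.univ.filter fun k : Fin T.length =>
        k ≤ LF i ∧ Farr T RA k = Larr T RA i).card
      = (Finset.univ.filter fun k : Fin T.length =>
          k ≤ i ∧ Larr T RA k = Larr T RA i).card := by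
  have hFL : ∀ k, Farr T RA (LF k) = Larr T RA k := by
    intro k
    rw [farr_LF T RA LF hLF k, larr_eq_lastSym]
  refine Finset.card_bij' (fun k _ => LF.symm k) (fun k _ => LF k) ?_ ?_ ?_ ?_
  · intro k hk
    rw [Finset.mem_filter] at hk ⊢
    obtain ⟨_, hk1, hk2⟩ := hk
    have hL : Larr T RA (LF.symm k) = Larr T RA i := by
      have h2 := hFL (LF.symm k)
      rw [LF.apply_symm_apply] at h2
      exact h2.symm.trans hk2
    refine ⟨Finset.mem_univ _, ?_, hL⟩
    by_contra hcon
    push_neg at hcon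
    have h3 := main_mono T RA hRA LF hLF i (LF.symm k) hcon hL.symm
    rw [LF.apply_symm_apply] at h3
    exact absurd hk1 (not_le.mpr h3)
  · intro k hk
    rw [Finset.mem_filter] at hk ⊢
    obtain ⟨_, hk1, hk2⟩ := hk
    refine ⟨Finset.mem_univ _, ?_, by rw [hFL k, hk2]⟩
    rcases eq_or_lt_of_le hk1 with h | h
    · exact le_of_eq (congrArg (fun x => LF x) h)
    · exact le_of_lt (main_mono T RA hRA LF hLF k i h (by rw [hk2]))
  · intro k _; exact LF.apply_symm_apply k
  · intro k _; exact LF.symm_apply_apply k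

end Final
end Aux

/-- For every `1 ≤ i ≤ n`, with `x = L_T[i]` and `j = LF_T(i)`:
`F_T[j] = x` and `|F_T[1:j]|_x = |L_T[1:i]|_x`, i.e. `LF_T(i)` is the position of
the `|L_T[1:i]|_x`-th occurrence of `x` in `F_T`; symmetrically, with `y = F_T[j]`,
`LF_T⁻¹(j)` is the position of the `|F_T[1:j]|_y`-th occurrence of `y` in `L_T`. -/
theorem LF_select_rank [LinearOrder σ] [DecidableEq π] [Inhabited σ]
    (d : σ) (hd : ∀ a : σ, d ≤ a)
    (T : List (σ ⊕ π)) (hT : EndsWith T d)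
    (RA : Fin T.length ≃ Fin T.length) (hRA : IsRA T RA)
    (LF : Fin T.length ≃ Fin T.length) (hLF : IsLF T RA LF) :
    (∀ i : Fin T.length,
        Farr T RA (LF i) = Larr T RA i ∧
        (Finset.univ.filter fun k : Fin T.length =>
            k ≤ LF i ∧ Farr T RA k = Larr T RA i).card
          = (Finset.univ.filter fun k : Fin T.length =>
              k ≤ i ∧ Larr T RA k = Larr T RA i).card) ∧
    (∀ j : Fin T.length,
        Larr T RA (LF.symm j) = Farr T RA j ∧
        (Finset.univ.filter fun k : Fin T.length =>
            k ≤ LF.symm j ∧ Larr T RA k = Farr T RA j).card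
          = (Finset.univ.filter fun k : Fin T.length =>
              k ≤ j ∧ Farr T RA k = Farr T RA j).card) := by
  have hFL : ∀ k, Farr T RA (LF k) = Larr T RA k := by
    intro k
    rw [Aux.farr_LF T RA LF hLF k, Aux.larr_eq_lastSym]
  constructor
  · intro i
    exact ⟨hFL i, Aux.card_eq T RA hRA LF hLF i⟩
  · intro j
    have hF : Larr T RA (LF.symm j) = Farr T RA j := by
      have := hFL (LF.symm j)
      rw [LF.apply_symm_apply] at this
      exact this.symm
    refine ⟨hF, ?_⟩
    have := Aux.card_eq T RA hRA LF hLF (LF.symm j)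
    rw [LF.apply_symm_apply, hF] at this
    exact this.symm
end
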